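/- arXiv:1204.2888 — 9 statements merged into one kernel-verified Lean document; each statement's English description precedes it below -/
import Mathlib

section
/- Let Δ be an obtuse basis of V and let Δ¹ ⊆ Δ be a subset. Let V₁ be the orthogonal complement in V of the span of Δ¹. Then the family of orthogonal projections onto V₁ of the elements of Δ ∖ Δ¹ is a basis of V₁, and this basis is obtuse. -/
open scoped RealInnerProductSpace
open Submodule Module

section aux
set_option linter.unusedSectionVars false
variable {V : Type*} [NormedAddCommGroup V] [InnerProductSpace ℝ V] [FiniteDimensional ℝ V]

private lemma sub_orthogonalProjection_mem_orthogonal {K : Submodule ℝ V}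
    [K.HasOrthogonalProjection] (v : V) : v - (K.orthogonalProjectionOnto v : V) ∈ Kᗮ :=
  sub_starProjection_mem_orthogonal v

private lemma eq_orthogonalProjection_of_mem_orthogonal {K : Submodule ℝ V}
    [K.HasOrthogonalProjection] {u v : V} (hv : v ∈ K) (hvo : u - v ∈ Kᗮ) :
    (K.orthogonalProjectionOnto u : V) = v :=
  eq_starProjection_of_mem_orthogonal hv hvo

private lemma aux_mem_orthogonal_span_iff {s : Set V} {w : V} :
    w ∈ (Submodule.span ℝ s)ᗮ ↔ ∀ u ∈ s, ⟪u, w⟫ = 0 := by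
  constructor
  · intro hw u hu
    exact (Submodule.mem_orthogonal _ _).mp hw u (Submodule.subset_span hu)
  · intro h
    rw [Submodule.mem_orthogonal]
    intro u hu
    induction hu using Submodule.span_induction with
    | mem u hu => exact h u hu
    | zero => simp
    | add u v _ _ hu hv => rw [inner_add_left, hu, hv, add_zero]
    | smul c u _ hu => rw [inner_smul_left, hu, mul_zero]

private lemma aux_not_mem_span {Δ S : Finset V}
    (hli : LinearIndependent ℝ ((↑) : ↥(Δ : Set V) → V))
    (hS : S ⊆ Δ) {α : V} (hα : α ∈ Δ) (hαS : α ∉ S) :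
    α ∉ Submodule.span ℝ (S : Set V) := by
  have h := hli.notMem_span_image (s := {i : ↥(Δ : Set V) | (i : V) ∈ S})
    (x := ⟨α, hα⟩) (by simpa using hαS)
  have himg : ((↑) : ↥(Δ : Set V) → V) '' {i : ↥(Δ : Set V) | (i : V) ∈ S} = (S : Set V) := by
    ext y
    constructor
    · rintro ⟨i, hi, rfl⟩
      exact hi
    · intro hy
      exact ⟨⟨y, hS hy⟩, by simpa using hy, rfl⟩
  rwa [himg] at h

private lemma aux_inner_proj (K : Submodule ℝ V) (u : V) (hu : u ∈ K) (v : V) :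
    ⟪u, (orthogonalProjection K v : V)⟫ = ⟪u, v⟫ := by
  have h0 := (Submodule.mem_orthogonal K _).mp (sub_orthogonalProjection_mem_orthogonal v) u hu
  rw [inner_sub_right] at h0
  linarith

private lemma aux_key {Δ : Finset V} [DecidableEq V]
    (hli : LinearIndependent ℝ ((↑) : ↥(Δ : Set V) → V))
    (hobtuse : ∀ α ∈ Δ, ∀ β ∈ Δ, α ≠ β → ⟪α, β⟫ ≤ 0)
    (S : Finset V) (hS : S ⊆ Δ) :
    ∀ x ∈ Δ, x ∉ S → ∀ y ∈ Δ, y ∉ S → x ≠ y →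
      ⟪(orthogonalProjection (Submodule.span ℝ (S : Set V))ᗮ x : V), y⟫ ≤ 0 := by
  classical
  induction S using Finset.induction_on with
  | empty =>
    intro x hx _ y hy _ hxy
    have : (orthogonalProjection (Submodule.span ℝ ((∅ : Finset V) : Set V))ᗮ x : V) = x := by
      apply eq_orthogonalProjection_of_mem_orthogonal
      · rw [Finset.coe_empty, Submodule.span_empty, Submodule.bot_orthogonal_eq_top]
        trivial
      · simp
    rw [this]
    exact hobtuse x hx y hy hxy
  | insert _ _ hαS ih =>
    rename_i α S
    intro x hx hxS' y hy hyS' hxy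
    specialize ih (fun t ht => hS (Finset.mem_insert_of_mem ht))
    have hα : α ∈ Δ := hS (Finset.mem_insert_self _ _)
    have hSΔ : S ⊆ Δ := fun t ht => hS (Finset.mem_insert_of_mem ht)
    have hxS : x ∉ S := fun h => hxS' (Finset.mem_insert_of_mem h)
    have hyS : y ∉ S := fun h => hyS' (Finset.mem_insert_of_mem h)
    have hxα : x ≠ α := fun h => hxS' (h ▸ Finset.mem_insert_self _ _)
    have hyα : y ≠ α := fun h => hyS' (h ▸ Finset.mem_insert_self _ _)
    set K := (Submodule.span ℝ (S : Set V))ᗮ with hK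
    set a : V := (orthogonalProjection K α : V) with ha
    set px : V := (orthogonalProjection K x : V) with hpx
    have hKortho : Kᗮ = Submodule.span ℝ (S : Set V) := Submodule.orthogonal_orthogonal _
    have hsub : ∀ v : V, v - (orthogonalProjection K v : V) ∈ Submodule.span ℝ (S : Set V) := by
      intro v
      have h := sub_orthogonalProjection_mem_orthogonal (K := K) v
      rwa [hKortho] at h
    have ha0 : a ≠ 0 := by
      intro h
      apply aux_not_mem_span hli hSΔ hα hαS
      have := hsub α
      rwa [← ha, h, sub_zero] at this
    have haa : (0:ℝ) < ⟪a, a⟫ := by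
      rw [real_inner_self_eq_norm_sq]
      exact pow_pos (norm_pos_iff.mpr ha0) 2
    set c : ℝ := ⟪a, x⟫ / ⟪a, a⟫ with hc
    have hproj : (orthogonalProjection (Submodule.span ℝ ((insert α S : Finset V) : Set V))ᗮ x : V)
        = px - c • a := by
      apply eq_orthogonalProjection_of_mem_orthogonal
      · rw [Finset.coe_insert]
        rw [aux_mem_orthogonal_span_iff]
        intro u hu
        rcases Set.mem_insert_iff.mp hu with rfl | huS
        · have hpxK : px ∈ K := (orthogonalProjection K x).2
          have haK : a ∈ K := (orthogonalProjection K u).2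
          have h1 : ⟪u - a, px⟫ = 0 :=
            (Submodule.mem_orthogonal _ px).mp hpxK (u - a) (hsub u)
          have h2 : ⟪u - a, a⟫ = 0 :=
            (Submodule.mem_orthogonal _ a).mp haK (u - a) (hsub u)
          have h3 : ⟪a, px⟫ = ⟪a, x⟫ := aux_inner_proj K a haK x
          rw [inner_sub_left] at h1 h2
          rw [inner_sub_right, inner_smul_right]
          have e1 : ⟪u, px⟫ = ⟪a, x⟫ := by linarith
          have e2 : ⟪u, a⟫ = ⟪a, a⟫ := by linarith
          have hne : ⟪a, a⟫ ≠ (0:ℝ) := ne_of_gt haa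
          rw [e1, e2, hc]
          field_simp
          ring
        · have hpxK : px ∈ K := (orthogonalProjection K x).2
          have haK : a ∈ K := (orthogonalProjection K α).2
          have h1 : ⟪u, px⟫ = 0 := by
            have := (Submodule.mem_orthogonal' _ _).mp hpxK u (Submodule.subset_span huS)
            rwa [real_inner_comm]
          have h2 : ⟪u, a⟫ = 0 := by
            have := (Submodule.mem_orthogonal' _ _).mp haK u (Submodule.subset_span huS)
            rwa [real_inner_comm]
          rw [inner_sub_right, inner_smul_right, h1, h2, mul_zero, sub_zero]
      · apply Submodule.le_orthogonal_orthogonal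
        have hmono : Submodule.span ℝ (S : Set V) ≤
            Submodule.span ℝ ((insert α S : Finset V) : Set V) := by
          apply Submodule.span_mono
          rw [Finset.coe_insert]
          exact Set.subset_insert _ _
        have hins : α ∈ Submodule.span ℝ ((insert α S : Finset V) : Set V) := by
          apply Submodule.subset_span
          rw [Finset.coe_insert]
          exact Set.mem_insert _ _
        have : x - (px - c • a) = (x - px) + c • (a - α) + c • α := by module
        rw [this]
        exact Submodule.add_mem _
          (Submodule.add_mem _ (hmono (hsub x))
            (Submodule.smul_mem _ _ (hmono (by simpa [ha] using Submodule.neg_mem _ (hsub α)))))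
          (Submodule.smul_mem _ _ hins)
    rw [hproj, inner_sub_left, inner_smul_left]
    have h1 : ⟪px, y⟫ ≤ 0 := ih x hx hxS y hy hyS hxy
    have h2 : ⟪a, x⟫ ≤ 0 := ih α hα hαS x hx hxS (Ne.symm hxα)
    have h3 : ⟪a, y⟫ ≤ 0 := ih α hα hαS y hy hyS (Ne.symm hyα)
    have hcle : c ≤ 0 := div_nonpos_of_nonpos_of_nonneg h2 (le_of_lt haa)
    simp only [RCLike.star_def, conj_trivial]
    nlinarith [mul_nonneg (neg_nonneg.mpr hcle) (neg_nonneg.mpr h3)]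

end aux

/-- Let `Δ` be an obtuse basis of `V` and `Δ₁ ⊆ Δ`. Let `V₁` be the
orthogonal complement of the span of `Δ₁`. Then the orthogonal projections onto `V₁` of the
elements of `Δ \ Δ₁` form a basis of `V₁`, and this basis is obtuse. -/
theorem stmt_0
    {V : Type*} [NormedAddCommGroup V] [InnerProductSpace ℝ V] [FiniteDimensional ℝ V]
    [DecidableEq V]
    (Δ : Finset V)
    (hli : LinearIndependent ℝ ((↑) : ↥(Δ : Set V) → V))
    (hspan : Submodule.span ℝ (Δ : Set V) = ⊤)
    (hobtuse : ∀ α ∈ Δ, ∀ β ∈ Δ, α ≠ β → ⟪α, β⟫ ≤ 0)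
    (Δ₁ : Finset V) (hΔ₁ : Δ₁ ⊆ Δ) :
    LinearIndependent ℝ
      (fun γ : ↥((Δ \ Δ₁ : Finset V) : Set V) =>
        Submodule.orthogonalProjectionOnto (Submodule.span ℝ (Δ₁ : Set V))ᗮ (γ : V)) ∧
    Submodule.span ℝ
      (Set.range fun γ : ↥((Δ \ Δ₁ : Finset V) : Set V) =>
        Submodule.orthogonalProjectionOnto (Submodule.span ℝ (Δ₁ : Set V))ᗮ (γ : V)) = ⊤ ∧
    ∀ γ γ' : ↥((Δ \ Δ₁ : Finset V) : Set V), γ ≠ γ' →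
      ⟪(Submodule.orthogonalProjectionOnto (Submodule.span ℝ (Δ₁ : Set V))ᗮ (γ : V) : V),
        (Submodule.orthogonalProjectionOnto (Submodule.span ℝ (Δ₁ : Set V))ᗮ (γ' : V) : V)⟫ ≤ 0 := by
  set K := (Submodule.span ℝ (Δ₁ : Set V))ᗮ with hK
  -- Part 2: span
  have hspan2 : Submodule.span ℝ
      (Set.range fun γ : ↥((Δ \ Δ₁ : Finset V) : Set V) =>
        orthogonalProjection K (γ : V)) = ⊤ := by
    set pl := (orthogonalProjection K).toLinearMap with hpl
    have hrange : (Set.range fun γ : ↥((Δ \ Δ₁ : Finset V) : Set V) =>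
        orthogonalProjection K (γ : V)) = pl '' ((Δ \ Δ₁ : Finset V) : Set V) := by
      ext u
      constructor
      · rintro ⟨γ, rfl⟩
        exact ⟨γ, γ.2, rfl⟩
      · rintro ⟨v, hv, rfl⟩
        exact ⟨⟨v, hv⟩, rfl⟩
    rw [hrange, ← Submodule.map_span]
    have hbot : Submodule.map pl (Submodule.span ℝ (Δ₁ : Set V)) = ⊥ := by
      rw [eq_bot_iff]
      rintro u hu
      rw [Submodule.mem_map] at hu
      obtain ⟨v, hv, rfl⟩ := hu
      have hvK : v ∈ Kᗮ := by
        rw [hK, Submodule.orthogonal_orthogonal]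
        exact hv
      have := Submodule.orthogonalProjectionOnto_apply_of_mem_orthogonal hvK
      simpa [hpl] using this
    have hsup : Submodule.map pl (Submodule.span ℝ (Δ : Set V)) =
        Submodule.map pl (Submodule.span ℝ ((Δ \ Δ₁ : Finset V) : Set V)) := by
      conv_lhs => rw [← Finset.union_sdiff_of_subset hΔ₁]
      rw [Finset.coe_union, Submodule.span_union, Submodule.map_sup, hbot, bot_sup_eq]
    rw [← hsup, hspan, Submodule.map_top, LinearMap.range_eq_top]
    intro u
    exact ⟨(u : V), by simpa [hpl] using orthogonalProjection_mem_subspace_eq_self u⟩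
  refine ⟨?_, hspan2, ?_⟩
  · -- Part 1: linear independence via cardinality
    apply linearIndependent_of_top_le_span_of_card_eq_finrank (le_of_eq hspan2.symm)
    -- card = finrank
    have hcard : Fintype.card ↥((Δ \ Δ₁ : Finset V) : Set V) = (Δ \ Δ₁).card := by
      rw [Fintype.card_congr (Equiv.subtypeEquivRight (fun x => Finset.mem_coe)),
        Fintype.card_coe]
    have hli₁ : LinearIndependent ℝ ((↑) : ↥(Δ₁ : Set V) → V) :=
      LinearIndepOn.mono (v := id) hli (Finset.coe_subset.mpr hΔ₁)
    have hfr1 : finrank ℝ (Submodule.span ℝ (Δ₁ : Set V)) = Δ₁.card :=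
      finrank_span_finset_eq_card hli₁
    have hfrV : finrank ℝ V = Δ.card := by
      have b : Basis ↥(Δ : Set V) ℝ V := Basis.mk hli (by rw [Subtype.range_coe]; exact hspan.ge)
      rw [finrank_eq_card_basis b,
        Fintype.card_congr (Equiv.subtypeEquivRight (fun x => Finset.mem_coe)),
        Fintype.card_coe]
    have hfrK : finrank ℝ (Submodule.span ℝ (Δ₁ : Set V)) + finrank ℝ K = finrank ℝ V :=
      Submodule.finrank_add_finrank_orthogonal _
    have hcard_le : Δ₁.card ≤ Δ.card := Finset.card_le_card hΔ₁
    rw [hcard, Finset.card_sdiff_of_subset hΔ₁]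
    omega
  · -- Part 3: obtuseness
    intro γ γ' hne
    have hγ : (γ : V) ∈ Δ \ Δ₁ := γ.2
    have hγ' : (γ' : V) ∈ Δ \ Δ₁ := γ'.2
    rw [Finset.mem_sdiff] at hγ hγ'
    have hneV : (γ : V) ≠ (γ' : V) := fun h => hne (Subtype.ext h)
    have h1 := aux_key hli hobtuse Δ₁ hΔ₁ (γ : V) hγ.1 hγ.2 (γ' : V) hγ'.1 hγ'.2 hneV
    have h2 : ⟪(orthogonalProjection K (γ : V) : V),
        (orthogonalProjection K (γ' : V) : V)⟫ = ⟪(orthogonalProjection K (γ : V) : V), (γ' : V)⟫ :=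
      aux_inner_proj K _ (orthogonalProjection K (γ : V)).2 _
    rw [h2]
    exact h1
end

section
/- If Δ is an obtuse basis of V, then the dual basis of Δ in V is acute: for any two members ϖ, ϖ' of the dual basis, ⟨ϖ, ϖ'⟩ ≥ 0. -/
open scoped RealInnerProductSpace

/-- If `Δ` is an obtuse basis of `V`, then the dual basis of `Δ` in `V`
is acute: for any two members `ϖ α`, `ϖ α'` of the dual basis, `⟪ϖ α, ϖ α'⟫ ≥ 0`. -/
theorem stmt_1
    {V : Type*} [NormedAddCommGroup V] [InnerProductSpace ℝ V] [FiniteDimensional ℝ V]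
    [DecidableEq V]
    (Δ : Finset V)
    (hli : LinearIndependent ℝ ((↑) : ↥(Δ : Set V) → V))
    (hspan : Submodule.span ℝ (Δ : Set V) = ⊤)
    (hobtuse : ∀ α ∈ Δ, ∀ β ∈ Δ, α ≠ β → ⟪α, β⟫ ≤ 0)
    (ϖ : V → V)
    (hdual : ∀ α ∈ Δ, ∀ β ∈ Δ, ⟪ϖ α, β⟫ = if β = α then 1 else 0) :
    ∀ α ∈ Δ, ∀ α' ∈ Δ, 0 ≤ ⟪ϖ α, ϖ α'⟫ := by
  classical
  intro α hα α' hα'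
  have hsp : ⊤ ≤ Submodule.span ℝ (Set.range ((↑) : ↥(Δ : Set V) → V)) := by
    rw [Subtype.range_coe, hspan]
  let b : Module.Basis ↥(Δ : Set V) ℝ V := Module.Basis.mk hli hsp
  set w := ϖ α' with hwdef
  let c : ↥(Δ : Set V) → ℝ := fun β => b.repr w β
  have hw : ∑ β : ↥(Δ : Set V), c β • (β : V) = w := by
    have := b.sum_repr w
    simpa [b, Module.Basis.mk_apply, c] using this
  let d : ↥(Δ : Set V) → ℝ := fun β => if c β < 0 then -c β else 0
  let e : ↥(Δ : Set V) → ℝ := fun β => if c β < 0 then 0 else c β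
  have hd0 : ∀ β, 0 ≤ d β := by
    intro β; by_cases h : c β < 0 <;> simp [d, h] <;> linarith
  have he0 : ∀ β, 0 ≤ e β := by
    intro β; by_cases h : c β < 0 <;> simp [e, h] <;> linarith
  have hce : ∀ β, c β = e β - d β := by
    intro β; by_cases h : c β < 0 <;> simp [d, e, h]
  set wm := ∑ β : ↥(Δ : Set V), d β • (β : V) with hwm
  set wp := ∑ β : ↥(Δ : Set V), e β • (β : V) with hwp
  have hwpm : w = wp - wm := by
    rw [← hw, hwp, hwm, ← Finset.sum_sub_distrib]
    apply Finset.sum_congr rfl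
    intro β _
    rw [hce β, sub_smul]
  -- ⟪wp, wm⟫ ≤ 0
  have h1 : ⟪wp, wm⟫ ≤ 0 := by
    rw [hwp, hwm, sum_inner]
    apply Finset.sum_nonpos
    intro β _
    rw [real_inner_smul_left, inner_sum]
    rw [Finset.mul_sum]
    apply Finset.sum_nonpos
    intro γ _
    rw [real_inner_smul_right]
    by_cases hbg : β = γ
    · subst hbg
      by_cases h : c β < 0 <;> simp [d, e, h]
    · have hne : (β : V) ≠ (γ : V) := fun h => hbg (Subtype.coe_injective h)
      have := hobtuse (β : V) β.2 (γ : V) γ.2 hne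
      have := mul_nonneg (he0 β) (hd0 γ)
      nlinarith
  -- 0 ≤ ⟪w, wm⟫
  have h2 : (0 : ℝ) ≤ ⟪w, wm⟫ := by
    rw [hwm, inner_sum]
    apply Finset.sum_nonneg
    intro γ _
    rw [real_inner_smul_right, hwdef, hdual α' hα' (γ : V) γ.2]
    by_cases h : (γ : V) = α' <;> simp [h, hd0 γ]
  -- wm = 0
  have h3 : ⟪wm, wm⟫ ≤ 0 := by
    have : wm = wp - w := by rw [hwpm]; abel
    calc ⟪wm, wm⟫ = ⟪wp, wm⟫ - ⟪w, wm⟫ := by rw [this, inner_sub_left]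
    _ ≤ 0 := by linarith
  have hwm0 : wm = 0 := by
    have h4 : (0:ℝ) ≤ ⟪wm, wm⟫ := real_inner_self_nonneg
    have : ⟪wm, wm⟫ = (0:ℝ) := le_antisymm h3 h4
    exact inner_self_eq_zero.mp this
  -- all d β = 0, hence c β ≥ 0
  have hdzero : ∀ β, d β = 0 := by
    have := Fintype.linearIndependent_iff.mp hli d (by rw [← hwm, hwm0])
    exact this
  have hc0 : ∀ β, 0 ≤ c β := by
    intro β
    by_contra h
    push_neg at h
    have : d β = -c β := by simp [d, h]
    rw [hdzero β] at this
    linarith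
  -- conclude
  have : ⟪ϖ α, w⟫ = c ⟨α, hα⟩ := by
    rw [← hw, inner_sum]
    rw [Finset.sum_eq_single (⟨α, hα⟩ : ↥(Δ : Set V))]
    · rw [real_inner_smul_right, hdual α hα α hα]
      simp
    · intro γ _ hγ
      rw [real_inner_smul_right, hdual α hα (γ : V) γ.2]
      have : (γ : V) ≠ α := fun h => hγ (Subtype.ext h)
      simp [this]
    · intro h
      exact absurd (Finset.mem_univ _) h
  rw [hwdef] at this ⊢
  rw [this]
  exact hc0 _
end

section
/- Let Δ be an obtuse basis of V with dual basis (ϖ_α)_{α ∈ Δ} in V. Then every ϖ_α is a linear combination of elements of Δ with nonnegative coefficients. Consequently, for every X ∈ V satisfying ⟨α, X⟩ > 0 for all α ∈ Δ, one has ⟨ϖ_α, X⟩ > 0 for all α ∈ Δ. -/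
open scoped RealInnerProductSpace

/-- Let `Δ` be an obtuse basis of `V` with dual basis `(ϖ α)_{α ∈ Δ}` in `V`.
Then every `ϖ α` is a nonnegative linear combination of elements of `Δ`; consequently, for
every `X` with `⟪α, X⟫ > 0` for all `α ∈ Δ` one has `⟪ϖ α, X⟫ > 0` for all `α ∈ Δ`. -/
theorem stmt_2
    {V : Type*} [NormedAddCommGroup V] [InnerProductSpace ℝ V] [FiniteDimensional ℝ V]
    [DecidableEq V]
    (Δ : Finset V)
    (hli : LinearIndependent ℝ ((↑) : ↥(Δ : Set V) → V))
    (hspan : Submodule.span ℝ (Δ : Set V) = ⊤)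
    (hobtuse : ∀ α ∈ Δ, ∀ β ∈ Δ, α ≠ β → ⟪α, β⟫ ≤ 0)
    (ϖ : V → V)
    (hdual : ∀ α ∈ Δ, ∀ β ∈ Δ, ⟪ϖ α, β⟫ = if β = α then 1 else 0) :
    (∀ α ∈ Δ, ∃ c : V → ℝ, (∀ β ∈ Δ, 0 ≤ c β) ∧ ϖ α = ∑ β ∈ Δ, c β • β) ∧
    (∀ X : V, (∀ α ∈ Δ, 0 < ⟪α, X⟫) → ∀ α ∈ Δ, 0 < ⟪ϖ α, X⟫) := by
  classical
  -- basis from Δ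
  let b : Module.Basis ↥(Δ : Set V) ℝ V := Module.Basis.mk hli (by rw [Subtype.range_coe, hspan])
  have hb : ∀ i : ↥(Δ : Set V), b i = (i : V) := fun i => Module.Basis.mk_apply hli _ i
  -- linear independence in Finset form
  have hind : ∀ f : V → ℝ, ∑ β ∈ Δ, f β • β = 0 → ∀ β ∈ Δ, f β = 0 := by
    rw [Fintype.linearIndependent_iff] at hli
    intro f hf β hβ
    refine hli (fun i => f i) ?_ ⟨β, by simpa using hβ⟩
    rw [show (∑ i : ↥(Δ : Set V), f i • (i : V)) = ∑ β ∈ Δ, f β • β from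
      Finset.sum_coe_sort Δ (fun β => f β • β)]
    exact hf
  -- existence of a representation
  have hrep : ∀ α ∈ Δ, ∃ c : V → ℝ, ϖ α = ∑ β ∈ Δ, c β • β := by
    intro α hα
    refine ⟨fun β => if h : β ∈ Δ then b.repr (ϖ α) ⟨β, by simpa using h⟩ else 0, ?_⟩
    conv_lhs => rw [← b.sum_repr (ϖ α)]
    rw [← Finset.sum_coe_sort Δ (fun β =>
      (if h : β ∈ Δ then b.repr (ϖ α) ⟨β, by simpa using h⟩ else 0) • β)]
    refine Finset.sum_congr rfl fun i _ => ?_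
    rw [hb]
    simp [i.2]
  -- main claim: nonnegativity of coefficients
  have main : ∀ α ∈ Δ, ∀ c : V → ℝ, ϖ α = ∑ β ∈ Δ, c β • β → ∀ β ∈ Δ, 0 ≤ c β := by
    intro α hα c hc
    set N : Finset V := Δ.filter (fun β => c β < 0) with hN
    set P : Finset V := Δ.filter (fun β => ¬ c β < 0) with hP
    set xm : V := ∑ β ∈ N, (-c β) • β with hxm
    set xp : V := ∑ β ∈ P, c β • β with hxp
    have hsplit : ϖ α = xp - xm := by
      rw [hc, ← Finset.sum_filter_add_sum_filter_not Δ (fun β => ¬ c β < 0)]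
      simp only [not_not, hxp, hxm, hP, hN]
      rw [sub_eq_add_neg, ← Finset.sum_neg_distrib]
      congr 1
      refine Finset.sum_congr rfl fun β _ => by rw [neg_smul, neg_neg]
    have h1 : ⟪xp, xm⟫ ≤ 0 := by
      rw [hxp, hxm, sum_inner]
      refine Finset.sum_nonpos fun β hβ => ?_
      rw [inner_sum]
      refine Finset.sum_nonpos fun γ hγ => ?_
      rw [real_inner_smul_left, real_inner_smul_right]
      have hβΔ := Finset.mem_filter.mp hβ
      have hγΔ := Finset.mem_filter.mp hγ
      have hne : β ≠ γ := by
        rintro rfl; exact hβΔ.2 hγΔ.2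
      have := hobtuse β hβΔ.1 γ hγΔ.1 hne
      have hcβ : 0 ≤ c β := not_lt.mp hβΔ.2
      have hcγ : 0 < -c γ := by linarith [hγΔ.2]
      exact mul_nonpos_of_nonneg_of_nonpos hcβ (mul_nonpos_of_nonneg_of_nonpos hcγ.le this)
    have h2 : 0 ≤ ⟪ϖ α, xm⟫ := by
      rw [hxm, inner_sum]
      refine Finset.sum_nonneg fun γ hγ => ?_
      rw [real_inner_smul_right]
      have hγΔ := Finset.mem_filter.mp hγ
      have := hdual α hα γ hγΔ.1
      rw [this]
      have hcγ : 0 ≤ -c γ := by linarith [hγΔ.2]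
      positivity
    have h3 : ⟪xm, xm⟫ ≤ 0 := by
      have : xm = xp - ϖ α := by rw [hsplit]; abel
      calc ⟪xm, xm⟫ = ⟪xp - ϖ α, xm⟫ := by rw [← this]
        _ = ⟪xp, xm⟫ - ⟪ϖ α, xm⟫ := inner_sub_left _ _ _
        _ ≤ 0 := by linarith
    have h4 : xm = 0 := by
      have := le_antisymm h3 real_inner_self_nonneg
      exact inner_self_eq_zero.mp this
    have h5 : ∀ β ∈ Δ, (if β ∈ N then -c β else 0) = 0 := by
      refine hind _ ?_
      have key : ∑ β ∈ Δ, (if β ∈ N then -c β else 0) • β = ∑ β ∈ Δ ∩ N, (-c β) • β := by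
        rw [← Finset.sum_ite_mem]
        exact Finset.sum_congr rfl fun β _ => by split <;> simp
      rw [key, Finset.inter_eq_right.mpr (Finset.filter_subset _ _), ← hxm, h4]
    intro β hβ
    by_contra hneg
    have hβN : β ∈ N := Finset.mem_filter.mpr ⟨hβ, lt_of_not_ge hneg⟩
    have := h5 β hβ
    rw [if_pos hβN] at this
    have : c β = 0 := by linarith
    exact hneg (le_of_eq this.symm)
  constructor
  · intro α hα
    obtain ⟨c, hc⟩ := hrep α hα
    exact ⟨c, main α hα c hc, hc⟩
  · intro X hX α hα
    obtain ⟨c, hc⟩ := hrep α hα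
    have hcpos := main α hα c hc
    have hsum : ⟪ϖ α, X⟫ = ∑ β ∈ Δ, c β * ⟪β, X⟫ := by
      rw [hc, sum_inner]
      exact Finset.sum_congr rfl fun β _ => real_inner_smul_left _ _ _
    rw [hsum]
    refine Finset.sum_pos' (fun β hβ => mul_nonneg (hcpos β hβ) (hX β hβ).le) ?_
    -- there is a positive coefficient, else ϖ α = 0 contradicting ⟪ϖ α, α⟫ = 1
    by_contra hno
    push_neg at hno
    have hzero : ∀ β ∈ Δ, c β = 0 := by
      intro β hβ
      have h1 := hno β hβ
      have h2 := mul_nonneg (hcpos β hβ) (hX β hβ).le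
      have h3 : c β * ⟪β, X⟫ = 0 := le_antisymm h1 h2
      rcases mul_eq_zero.mp h3 with h | h
      · exact h
      · exact absurd h (ne_of_gt (hX β hβ))
    have : ϖ α = 0 := by
      rw [hc]
      refine Finset.sum_eq_zero fun β hβ => by rw [hzero β hβ, zero_smul]
    have h1 := hdual α hα α hα
    rw [this, if_pos rfl] at h1
    simp at h1
end

section
/- Let Δ be an obtuse basis of V, let A ⊆ Δ be a subset and let α ∈ Δ ∖ A. Let ᾱ be the orthogonal projection of α onto the orthogonal complement of the span of A. Then for every X ∈ V satisfying ⟨γ, X⟩ > 0 for all γ ∈ Δ, one has ⟨ᾱ, X⟩ ≥ ⟨α, X⟩ > 0. -/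
open scoped RealInnerProductSpace

/-- Let `Δ` be an obtuse basis of `V`, `A ⊆ Δ` and `α ∈ Δ \ A`. Let `ᾱ` be
the orthogonal projection of `α` onto the orthogonal complement of the span of `A`. Then for
every `X` with `⟪γ, X⟫ > 0` for all `γ ∈ Δ`, one has `⟪ᾱ, X⟫ ≥ ⟪α, X⟫ > 0`. -/
theorem stmt_3
    {V : Type*} [NormedAddCommGroup V] [InnerProductSpace ℝ V] [FiniteDimensional ℝ V]
    [DecidableEq V]
    (Δ : Finset V)
    (hli : LinearIndependent ℝ ((↑) : ↥(Δ : Set V) → V))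
    (hspan : Submodule.span ℝ (Δ : Set V) = ⊤)
    (hobtuse : ∀ α ∈ Δ, ∀ β ∈ Δ, α ≠ β → ⟪α, β⟫ ≤ 0)
    (A : Finset V) (hA : A ⊆ Δ) (α : V) (hα : α ∈ Δ \ A)
    (X : V) (hX : ∀ γ ∈ Δ, 0 < ⟪γ, X⟫) :
    ⟪α, X⟫ ≤ ⟪(Submodule.orthogonalProjectionOnto (Submodule.span ℝ (A : Set V))ᗮ α : V), X⟫ ∧
    0 < ⟪α, X⟫ := by
  obtain ⟨hαΔ, hαA⟩ := Finset.mem_sdiff.mp hα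
  have hposα : 0 < ⟪α, X⟫ := hX α hαΔ
  refine ⟨?_, hposα⟩
  set W := Submodule.span ℝ (A : Set V) with hW
  -- key linear independence fact on A
  have hkey : ∀ g : V → ℝ, ∑ γ ∈ A, g γ • γ = 0 → ∀ γ ∈ A, g γ = 0 := by
    intro g hg γ hγ
    have hsum : ∑ x : ↥(Δ : Set V),
        (if (x : V) ∈ A then g (x : V) else 0) • (x : V) = 0 := by
      rw [Finset.sum_set_coe (f := fun γ => (if γ ∈ A then g γ else 0) • γ),
        Finset.toFinset_coe]
      have h1 : ∑ γ ∈ Δ, (if γ ∈ A then g γ else 0) • γ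
          = ∑ γ ∈ Δ.filter (· ∈ A), g γ • γ := by
        rw [Finset.sum_filter]
        exact Finset.sum_congr rfl fun γ _ => by split <;> simp
      have h2 : Δ.filter (· ∈ A) = A := by
        ext δ; simp only [Finset.mem_filter]
        exact ⟨fun h => h.2, fun h => ⟨hA h, h⟩⟩
      rw [h1, h2, hg]
    have := linearIndependent_iff'.mp hli Finset.univ
      (fun x => if (x : V) ∈ A then g (x : V) else 0)
      (by simpa using hsum) ⟨γ, Finset.mem_coe.mpr (hA hγ)⟩ (Finset.mem_univ _)
    simpa [hγ] using this
  set p : V := (Submodule.orthogonalProjectionOnto W α : V) with hpdef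
  have hpW : p ∈ W := (Submodule.orthogonalProjectionOnto W α).2
  obtain ⟨f, -, hf⟩ := Submodule.mem_span_finset.mp hpW
  -- the positive part of p is zero
  set P : Finset V := A.filter (fun γ => 0 < f γ) with hP
  have hPA : P ⊆ A := Finset.filter_subset _ _
  set q : V := ∑ γ ∈ P, f γ • γ with hq
  have hqW : q ∈ W := by
    refine Submodule.sum_smul_mem _ _ fun γ hγ => Submodule.subset_span ?_
    exact hPA hγ
  have horth : ⟪α - p, q⟫ = 0 := by
    have h1 : α - p ∈ Wᗮ := Submodule.sub_starProjection_mem_orthogonal (K := W) α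
    have := (Submodule.mem_orthogonal W (α - p)).mp h1 q hqW
    rw [real_inner_comm]; exact this
  have hαq : ⟪α, q⟫ ≤ 0 := by
    rw [hq, inner_sum]
    refine Finset.sum_nonpos fun γ hγ => ?_
    obtain ⟨hγA, hγpos⟩ := Finset.mem_filter.mp hγ
    rw [real_inner_smul_right]
    have hne : α ≠ γ := fun h => hαA (h ▸ hγA)
    exact mul_nonpos_of_nonneg_of_nonpos hγpos.le (hobtuse α hαΔ γ (hA hγA) hne)
  have hpminus : p - q = ∑ γ ∈ A \ P, f γ • γ := by
    rw [← hf, hq, ← Finset.sum_sdiff hPA, add_sub_cancel_right]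
  have hcross : 0 ≤ ⟪p - q, q⟫ := by
    rw [hpminus, hq, sum_inner]
    refine Finset.sum_nonneg fun δ hδ => ?_
    rw [real_inner_smul_left, inner_sum]
    obtain ⟨hδA, hδnp⟩ := Finset.mem_sdiff.mp hδ
    have hδle : f δ ≤ 0 := by
      by_contra h
      exact hδnp (Finset.mem_filter.mpr ⟨hδA, lt_of_not_ge h⟩)
    have hS : ∑ γ ∈ P, ⟪δ, f γ • γ⟫ ≤ 0 := by
      refine Finset.sum_nonpos fun γ hγ => ?_
      obtain ⟨hγA, hγpos⟩ := Finset.mem_filter.mp hγ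
      rw [real_inner_smul_right]
      have hne : δ ≠ γ := fun h => hδnp (h ▸ hγ)
      exact mul_nonpos_of_nonneg_of_nonpos hγpos.le (hobtuse δ (hA hδA) γ (hA hγA) hne)
    nlinarith
  have hq0 : q = 0 := by
    have e1 : ⟪α - p, q⟫ = ⟪α, q⟫ - ⟪p, q⟫ := inner_sub_left _ _ _
    have e2 : ⟪p - q, q⟫ = ⟪p, q⟫ - ⟪q, q⟫ := inner_sub_left _ _ _
    have hqq : ⟪q, q⟫ ≤ 0 := by linarith
    have hn : ⟪q, q⟫ = 0 := le_antisymm hqq real_inner_self_nonneg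
    exact inner_self_eq_zero.mp hn
  -- hence all coefficients are ≤ 0
  have hfle : ∀ γ ∈ A, f γ ≤ 0 := by
    intro γ hγ
    by_contra h
    have hγP : γ ∈ P := Finset.mem_filter.mpr ⟨hγ, lt_of_not_ge h⟩
    have hsum0 : ∑ δ ∈ A, (if δ ∈ P then f δ else 0) • δ = 0 := by
      have h1 : ∑ δ ∈ A, (if δ ∈ P then f δ else 0) • δ
          = ∑ δ ∈ A.filter (· ∈ P), f δ • δ := by
        rw [Finset.sum_filter]
        exact Finset.sum_congr rfl fun δ _ => by split <;> simp
      have h2 : A.filter (· ∈ P) = P := by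
        ext δ; simp only [Finset.mem_filter]
        exact ⟨fun hh => hh.2, fun hh => ⟨hPA hh, hh⟩⟩
      rw [h1, h2, ← hq, hq0]
    have := hkey _ hsum0 γ hγ
    simp only [hγP, if_pos] at this
    exact h (le_of_eq this)
  -- conclude
  have hpX : ⟪p, X⟫ ≤ 0 := by
    rw [← hf, sum_inner]
    refine Finset.sum_nonpos fun γ hγ => ?_
    rw [real_inner_smul_left]
    exact mul_nonpos_of_nonpos_of_nonneg (hfle γ hγ) (hX γ (hA hγ)).le
  have hsum : p + (Submodule.orthogonalProjectionOnto Wᗮ α : V) = α :=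
    Submodule.starProjection_add_starProjection_orthogonal (K := W) α
  have hfin : ⟪α, X⟫ = ⟪p, X⟫ + ⟪(Submodule.orthogonalProjectionOnto Wᗮ α : V), X⟫ := by
    conv_lhs => rw [← hsum]
    exact inner_add_left _ _ _
  linarith
end

section
/- Let Δ be an obtuse basis of V and let A ⊆ B ⊆ Δ be subsets. Let (ϖ_α)_{α ∈ A} be the dual basis of A in the span of A. Suppose H ∈ V satisfies: ⟨γ_A, H⟩ > 0 for every γ ∈ B ∖ A, where γ_A denotes the orthogonal projection of γ onto the orthogonal complement of the span of A; and ⟨ϖ_α, H⟩ ≤ 0 for every α ∈ A. Then ⟨γ, H⟩ > 0 for every γ ∈ B ∖ A. -/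
open scoped RealInnerProductSpace

/-- Let `Δ` be an obtuse basis of `V`, `A ⊆ B ⊆ Δ`, and `(ϖ α)_{α ∈ A}` the
dual basis of `A` in the span of `A`. If `H` satisfies `⟪γ_A, H⟫ > 0` for every `γ ∈ B \ A`
(`γ_A` being the orthogonal projection of `γ` onto the orthogonal complement of span `A`) and
`⟪ϖ α, H⟫ ≤ 0` for every `α ∈ A`, then `⟪γ, H⟫ > 0` for every `γ ∈ B \ A`. -/
theorem stmt_4
    {V : Type*} [NormedAddCommGroup V] [InnerProductSpace ℝ V] [FiniteDimensional ℝ V]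
    [DecidableEq V]
    (Δ : Finset V)
    (hli : LinearIndependent ℝ ((↑) : ↥(Δ : Set V) → V))
    (hspan : Submodule.span ℝ (Δ : Set V) = ⊤)
    (hobtuse : ∀ α ∈ Δ, ∀ β ∈ Δ, α ≠ β → ⟪α, β⟫ ≤ 0)
    (A B : Finset V) (hAB : A ⊆ B) (hBΔ : B ⊆ Δ)
    (ϖ : V → V)
    (hϖmem : ∀ α ∈ A, ϖ α ∈ Submodule.span ℝ (A : Set V))
    (hdual : ∀ α ∈ A, ∀ β ∈ A, ⟪ϖ α, β⟫ = if β = α then 1 else 0)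
    (H : V)
    (h1 : ∀ γ ∈ B \ A,
      0 < ⟪(Submodule.orthogonalProjectionOnto (Submodule.span ℝ (A : Set V))ᗮ γ : V), H⟫)
    (h2 : ∀ α ∈ A, ⟪ϖ α, H⟫ ≤ 0) :
    ∀ γ ∈ B \ A, 0 < ⟪γ, H⟫ := by
  intro γ hγ
  set K : Submodule ℝ V := Submodule.span ℝ (A : Set V) with hK
  obtain ⟨hγB, hγA⟩ := Finset.mem_sdiff.mp hγ
  set p : V := (Submodule.orthogonalProjectionOnto K γ : V) with hp
  set q : V := (Submodule.orthogonalProjectionOnto Kᗮ γ : V) with hq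
  have hdecomp : p + q = γ := K.starProjection_add_starProjection_orthogonal γ
  set w : V := ∑ α ∈ A, ⟪γ, α⟫ • ϖ α with hw
  have hwmem : w ∈ K := Submodule.sum_mem _ fun α hα => Submodule.smul_mem _ _ (hϖmem α hα)
  have hpw : p = w := by
    have hsub : p - w ∈ K := Submodule.sub_mem _ (Submodule.orthogonalProjectionOnto K γ).2 hwmem
    have horth : p - w ∈ Kᗮ := by
      have key : ∀ α ∈ A, ⟪α, p - w⟫ = 0 := by
        intro α hα
        have hqα : ⟪q, α⟫ = 0 := by
          rw [real_inner_comm]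
          exact (Submodule.orthogonalProjectionOnto Kᗮ γ).2 α (Submodule.subset_span (by exact_mod_cast hα))
        have hpα : ⟪p, α⟫ = ⟪γ, α⟫ := by
          have : ⟪p + q, α⟫ = ⟪γ, α⟫ := by rw [hdecomp]
          rw [inner_add_left, hqα, add_zero] at this
          exact this
        have hwα : ⟪w, α⟫ = ⟪γ, α⟫ := by
          rw [hw, sum_inner]
          have : ∀ β ∈ A, ⟪(⟪γ, β⟫ : ℝ) • ϖ β, α⟫ = if α = β then ⟪γ, β⟫ else 0 := by
            intro β hβ
            rw [inner_smul_left]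
            rw [hdual β hβ α hα]
            simp [eq_comm]
          rw [Finset.sum_congr rfl this, Finset.sum_ite_eq]
          simp [hα]
        rw [inner_sub_right, real_inner_comm p α, real_inner_comm w α, hpα, hwα, sub_self]
      rw [Submodule.mem_orthogonal]
      intro u hu
      induction hu using Submodule.span_induction with
      | mem x hx => exact key x hx
      | zero => simp
      | add x y _ _ hx hy => rw [inner_add_left, hx, hy, add_zero]
      | smul c x _ hx => rw [inner_smul_left, hx, mul_zero]
    have h0 : p - w ∈ K ⊓ Kᗮ := ⟨hsub, horth⟩
    rw [Submodule.inf_orthogonal_eq_bot, Submodule.mem_bot] at h0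
    exact sub_eq_zero.mp h0
  have hpH : (0:ℝ) ≤ ⟪p, H⟫ := by
    rw [hpw, hw, sum_inner]
    apply Finset.sum_nonneg
    intro α hα
    rw [real_inner_smul_left]
    have hγα : ⟪γ, α⟫ ≤ 0 := by
      apply hobtuse γ (hBΔ hγB) α (hBΔ (hAB hα))
      intro h; exact hγA (h ▸ hα)
    nlinarith [h2 α hα]
  have hqH := h1 γ hγ
  calc (0:ℝ) < ⟪p, H⟫ + ⟪q, H⟫ := by linarith
    _ = ⟪γ, H⟫ := by rw [← inner_add_left, hdecomp]
end

section
/- Let Δ be an obtuse basis of V and let A ⊆ B ⊆ C ⊆ Δ be subsets. Then for every H ∈ V one has τ_A^B(H) ≤ τ̂_A^B(H), and moreover τ_A^B(H)·τ̂_B^C(H) ≤ τ̂_A^B(H)·τ̂_B^C(H) ≤ τ̂_A^C(H). -/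
set_option linter.unusedSectionVars false
set_option maxHeartbeats 1000000


open scoped RealInnerProductSpace Classical

variable {V : Type*} [NormedAddCommGroup V] [InnerProductSpace ℝ V] [FiniteDimensional ℝ V]
  [DecidableEq V]

/-- The orthogonal projection of `γ` onto the orthogonal complement of the span of `A`
(denoted `γ_A`). -/
noncomputable def projPerp (A : Finset V) (γ : V) : V :=
  (Submodule.orthogonalProjection (Submodule.span ℝ (A : Set V))ᗮ γ : V)


section
lemma mem_orth_span {s : Set V} {x : V} (h : ∀ u ∈ s, ⟪u, x⟫ = 0) :
    x ∈ (Submodule.span ℝ s)ᗮ := by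
  rw [Submodule.mem_orthogonal]
  intro u hu
  induction hu using Submodule.span_induction with
  | mem u hu => exact h u hu
  | zero => simp
  | add u v _ _ h1 h2 => rw [inner_add_left, h1, h2]; ring
  | smul c u _ h1 => rw [real_inner_smul_left, h1]; ring

lemma projPerp_mem_orth (A : Finset V) (γ : V) :
    projPerp A γ ∈ (Submodule.span ℝ (A : Set V))ᗮ :=
  (Submodule.orthogonalProjection _ γ).2

lemma inner_projPerp_left_zero {A : Finset V} (γ : V) {u : V}
    (hu : u ∈ Submodule.span ℝ (A : Set V)) : ⟪projPerp A γ, u⟫ = 0 := by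
  rw [real_inner_comm]; exact projPerp_mem_orth A γ u hu

lemma sub_projPerp_mem (A : Finset V) (γ : V) :
    γ - projPerp A γ ∈ Submodule.span ℝ (A : Set V) := by
  have : γ - projPerp A γ ∈ ((Submodule.span ℝ (A : Set V))ᗮ)ᗮ :=
    Submodule.sub_starProjection_mem_orthogonal (K := (Submodule.span ℝ (A : Set V))ᗮ) γ
  rwa [Submodule.orthogonal_orthogonal] at this

lemma projPerp_eq (A : Finset V) {γ x : V} (hx : x ∈ (Submodule.span ℝ (A : Set V))ᗮ)
    (hs : γ - x ∈ Submodule.span ℝ (A : Set V)) : projPerp A γ = x := by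
  refine Submodule.eq_starProjection_of_mem_orthogonal hx ?_
  rwa [Submodule.orthogonal_orthogonal]

lemma projPerp_mem_span {A B : Finset V} (hAB : A ⊆ B) {γ : V} (hγ : γ ∈ B) :
    projPerp A γ ∈ Submodule.span ℝ (B : Set V) := by
  have h1 : γ ∈ Submodule.span ℝ (B : Set V) := Submodule.subset_span hγ
  have h3 : γ - projPerp A γ ∈ Submodule.span ℝ (B : Set V) :=
    Submodule.span_mono (by exact_mod_cast hAB) (sub_projPerp_mem A γ)
  simpa using Submodule.sub_mem _ h1 h3

lemma projPerp_eq_zero {A : Finset V} {γ : V} (hγ : γ ∈ Submodule.span ℝ (A : Set V)) :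
    projPerp A γ = 0 :=
  projPerp_eq A (Submodule.zero_mem _) (by simpa using hγ)

lemma projPerp_sub_mem {A A' : Finset V} (h : A ⊆ A') (δ : V) :
    projPerp A δ - projPerp A' δ ∈ Submodule.span ℝ (A' : Set V) := by
  have h1 := sub_projPerp_mem A' δ
  have h2 : δ - projPerp A δ ∈ Submodule.span ℝ (A' : Set V) :=
    Submodule.span_mono (by exact_mod_cast h) (sub_projPerp_mem A δ)
  have := Submodule.sub_mem _ h1 h2
  simpa using this

lemma projPerp_empty (γ : V) : projPerp ∅ γ = γ := by
  refine projPerp_eq ∅ ?_ (by simp)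
  simp

lemma projPerp_insert {A : Finset V} {β : V} (hβ : projPerp A β ≠ 0) (γ : V) :
    projPerp (insert β A) γ = projPerp A γ -
      (⟪projPerp A γ, projPerp A β⟫ / ‖projPerp A β‖ ^ 2) • projPerp A β := by
  set b := projPerp A β with hb
  set g := projPerp A γ with hg
  have hnb : (0:ℝ) < ‖b‖ ^ 2 := by
    have : ‖b‖ ≠ 0 := norm_ne_zero_iff.2 hβ
    positivity
  have hcoe : ((insert β A : Finset V) : Set V) = insert β (A : Set V) := by simp
  refine projPerp_eq _ ?_ ?_
  · rw [hcoe]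
    apply mem_orth_span
    intro u hu
    rcases hu with rfl | hu
    · have h1 : ⟪u - b, g⟫ = 0 := by
        rw [real_inner_comm]; exact inner_projPerp_left_zero γ (sub_projPerp_mem A u)
      have h2 : ⟪u - b, b⟫ = 0 := by
        rw [real_inner_comm]; exact inner_projPerp_left_zero u (sub_projPerp_mem A u)
      rw [inner_sub_left] at h1 h2
      rw [inner_sub_right, real_inner_smul_right]
      have h3 : ⟪u, g⟫ = ⟪b, g⟫ := by linarith
      have h4 : ⟪u, b⟫ = ⟪b, b⟫ := by linarith
      rw [h3, h4, real_inner_self_eq_norm_sq, real_inner_comm b g]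
      field_simp
      ring
    · have h5 : ⟪g, u⟫ = 0 := inner_projPerp_left_zero γ (Submodule.subset_span hu)
      have h6 : ⟪b, u⟫ = 0 := inner_projPerp_left_zero β (Submodule.subset_span hu)
      have h7 : ⟪u, g⟫ = 0 := by rw [real_inner_comm]; exact h5
      have h8 : ⟪u, b⟫ = 0 := by rw [real_inner_comm]; exact h6
      rw [inner_sub_right, real_inner_smul_right, h7, h8]
      ring
  · have hAle : Submodule.span ℝ (A : Set V) ≤ Submodule.span ℝ ((insert β A : Finset V) : Set V) := by
      rw [hcoe]; exact Submodule.span_mono (Set.subset_insert _ _)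
    have h1 : γ - g ∈ Submodule.span ℝ ((insert β A : Finset V) : Set V) :=
      hAle (sub_projPerp_mem A γ)
    have hbmem : b ∈ Submodule.span ℝ ((insert β A : Finset V) : Set V) := by
      have hβmem : β ∈ Submodule.span ℝ ((insert β A : Finset V) : Set V) := by
        rw [hcoe]; exact Submodule.subset_span (Set.mem_insert _ _)
      have : β - b ∈ Submodule.span ℝ ((insert β A : Finset V) : Set V) :=
        hAle (sub_projPerp_mem A β)
      simpa using Submodule.sub_mem _ hβmem this
    have := Submodule.add_mem _ h1
      (Submodule.smul_mem _ (⟪g, b⟫ / ‖b‖ ^ 2) hbmem)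
    convert this using 1
    abel

end

/-- The characteristic function `τ_A^B` : equal to `1` if `⟪γ_A, H⟫ > 0` for every
`γ ∈ B \ A`, and `0` otherwise. -/
noncomputable def tauFn (A B : Finset V) (H : V) : ℝ :=
  if ∀ γ ∈ B \ A, 0 < ⟪projPerp A γ, H⟫ then 1 else 0

/-- The characteristic function `τ̂_A^B` (relative to a family `ϖ` of dual bases):
equal to `1` if `⟪ϖ A B γ, H⟫ > 0` for every `γ ∈ B \ A`, and `0` otherwise. -/
noncomputable def tauHatFn (ϖ : Finset V → Finset V → V → V) (A B : Finset V) (H : V) : ℝ :=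
  if ∀ γ ∈ B \ A, 0 < ⟪ϖ A B γ, H⟫ then 1 else 0

/-- `ϖ` is a family of dual bases: for all `A ⊆ B ⊆ Δ`, the family `(ϖ A B γ)_{γ ∈ B \ A}`
is the dual basis `Δ̂_A^B` of `Δ_A^B = (γ_A)_{γ ∈ B \ A}` in
`V_A^B = span B ⊓ (span A)ᗮ`. -/
def IsDualFamily (Δ : Finset V) (ϖ : Finset V → Finset V → V → V) : Prop :=
  ∀ A B : Finset V, A ⊆ B → B ⊆ Δ → ∀ γ ∈ B \ A,
    (ϖ A B γ ∈ Submodule.span ℝ (B : Set V) ⊓ (Submodule.span ℝ (A : Set V))ᗮ) ∧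
    ∀ δ ∈ B \ A, ⟪ϖ A B γ, projPerp A δ⟫ = if δ = γ then 1 else 0


section
variable {V : Type*} [NormedAddCommGroup V] [InnerProductSpace ℝ V] [FiniteDimensional ℝ V]
  [DecidableEq V]

lemma inner_proj_expand {g d b : V} (hb : b ≠ 0) :
    ⟪g - (⟪g, b⟫ / ‖b‖ ^ 2) • b, d - (⟪d, b⟫ / ‖b‖ ^ 2) • b⟫ =
      ⟪g, d⟫ - ⟪g, b⟫ * ⟪d, b⟫ / ‖b‖ ^ 2 := by
  have hn : (0:ℝ) < ‖b‖ ^ 2 := by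
    have : ‖b‖ ≠ 0 := norm_ne_zero_iff.2 hb
    positivity
  rw [inner_sub_left, inner_sub_right, inner_sub_right, real_inner_smul_left,
    real_inner_smul_left, real_inner_smul_right, real_inner_smul_right,
    real_inner_self_eq_norm_sq, real_inner_comm b d, real_inner_comm b g]
  field_simp
  ring

lemma not_mem_span_of_li {Δ : Finset V}
    (hli : LinearIndependent ℝ ((↑) : ↥(Δ : Set V) → V))
    {A : Finset V} (hA : A ⊆ Δ) {γ : V} (hγΔ : γ ∈ Δ) (hγA : γ ∉ A) :
    γ ∉ Submodule.span ℝ (A : Set V) := by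
  have himg : (Subtype.val '' {a : ↥(Δ : Set V) | ↑a ∈ A}) = (A : Set V) := by
    ext x
    constructor
    · rintro ⟨⟨y, hy⟩, hmem, rfl⟩; exact hmem
    · intro hx
      exact ⟨⟨x, by exact_mod_cast hA hx⟩, hx, rfl⟩
  have h := hli.notMem_span_image (s := {a : ↥(Δ : Set V) | ↑a ∈ A})
    (x := ⟨γ, by exact_mod_cast hγΔ⟩) (by simpa using hγA)
  rw [himg] at h
  exact h

lemma projPerp_ne_zero {Δ : Finset V}
    (hli : LinearIndependent ℝ ((↑) : ↥(Δ : Set V) → V))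
    {A : Finset V} (hA : A ⊆ Δ) {γ : V} (hγΔ : γ ∈ Δ) (hγA : γ ∉ A) :
    projPerp A γ ≠ 0 := by
  intro h
  apply not_mem_span_of_li hli hA hγΔ hγA
  have := sub_projPerp_mem A γ
  rwa [h, sub_zero] at this

lemma obtuse_projPerp {Δ : Finset V}
    (hli : LinearIndependent ℝ ((↑) : ↥(Δ : Set V) → V))
    (hobtuse : ∀ α ∈ Δ, ∀ β ∈ Δ, α ≠ β → ⟪α, β⟫ ≤ 0) :
    ∀ A : Finset V, A ⊆ Δ → ∀ γ ∈ Δ, ∀ δ ∈ Δ, γ ∉ A → δ ∉ A → γ ≠ δ →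
      ⟪projPerp A γ, projPerp A δ⟫ ≤ 0 := by
  intro A
  induction A using Finset.induction_on with
  | empty =>
    intro _ γ hγ δ hδ _ _ hne
    rw [projPerp_empty, projPerp_empty]
    exact hobtuse γ hγ δ hδ hne
  | @insert β s hβs ih =>
    intro hsub γ hγ δ hδ hγA hδA hne
    have hβΔ : β ∈ Δ := hsub (Finset.mem_insert_self β s)
    have hsΔ : s ⊆ Δ := fun x hx => hsub (Finset.mem_insert_of_mem hx)
    have hβ0 : projPerp s β ≠ 0 := projPerp_ne_zero hli hsΔ hβΔ hβs
    rw [Finset.mem_insert, not_or] at hγA hδA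
    have h1 := ih hsΔ γ hγ δ hδ hγA.2 hδA.2 hne
    have h2 := ih hsΔ γ hγ β hβΔ hγA.2 hβs hγA.1
    have h3 := ih hsΔ δ hδ β hβΔ hδA.2 hβs hδA.1
    rw [projPerp_insert hβ0, projPerp_insert hβ0, inner_proj_expand hβ0]
    have hn : (0:ℝ) < ‖projPerp s β‖ ^ 2 := by
      have : ‖projPerp s β‖ ≠ 0 := norm_ne_zero_iff.2 hβ0
      positivity
    have hm : (0:ℝ) ≤ ⟪projPerp s γ, projPerp s β⟫ * ⟪projPerp s δ, projPerp s β⟫ :=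
      by nlinarith
    have := div_nonneg hm hn.le
    linarith

end

section
variable {V : Type*} [NormedAddCommGroup V] [InnerProductSpace ℝ V] [FiniteDimensional ℝ V]
  [DecidableEq V]

lemma pos_step {Δ B : Finset V}
    (hli : LinearIndependent ℝ ((↑) : ↥(Δ : Set V) → V))
    (hobtuse : ∀ α ∈ Δ, ∀ β ∈ Δ, α ≠ β → ⟪α, β⟫ ≤ 0)
    (hBΔ : B ⊆ Δ) {A₀ : Finset V} (hA₀ : A₀ ⊆ Δ) {β : V} (hβB : β ∈ B) (hβA₀ : β ∉ A₀)
    {H : V} (h : ∀ δ ∈ B \ A₀, 0 < ⟪projPerp A₀ δ, H⟫) :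
    ∀ δ ∈ B \ insert β A₀, 0 < ⟪projPerp (insert β A₀) δ, H⟫ := by
  intro δ hδ
  rw [Finset.mem_sdiff, Finset.mem_insert, not_or] at hδ
  obtain ⟨hδB, hδβ, hδA₀⟩ := hδ
  have hβ0 : projPerp A₀ β ≠ 0 := projPerp_ne_zero hli hA₀ (hBΔ hβB) hβA₀
  rw [projPerp_insert hβ0, inner_sub_left, real_inner_smul_left]
  have hd := h δ (Finset.mem_sdiff.2 ⟨hδB, hδA₀⟩)
  have hb := h β (Finset.mem_sdiff.2 ⟨hβB, hβA₀⟩)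
  have hgb : ⟪projPerp A₀ δ, projPerp A₀ β⟫ ≤ 0 :=
    obtuse_projPerp hli hobtuse A₀ hA₀ δ (hBΔ hδB) β (hBΔ hβB) hδA₀ hβA₀ hδβ
  have hn : (0:ℝ) < ‖projPerp A₀ β‖ ^ 2 := by
    have : ‖projPerp A₀ β‖ ≠ 0 := norm_ne_zero_iff.2 hβ0
    positivity
  have h1 : ⟪projPerp A₀ δ, projPerp A₀ β⟫ / ‖projPerp A₀ β‖ ^ 2 ≤ 0 :=
    div_nonpos_of_nonpos_of_nonneg hgb hn.le
  nlinarith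

lemma pos_prop {Δ B : Finset V}
    (hli : LinearIndependent ℝ ((↑) : ↥(Δ : Set V) → V))
    (hobtuse : ∀ α ∈ Δ, ∀ β ∈ Δ, α ≠ β → ⟪α, β⟫ ≤ 0)
    (hBΔ : B ⊆ Δ) {H : V} :
    ∀ (A' A : Finset V), A ⊆ A' → A' ⊆ B → (∀ δ ∈ B \ A, 0 < ⟪projPerp A δ, H⟫) →
      ∀ δ ∈ B \ A', 0 < ⟪projPerp A' δ, H⟫ := by
  intro A'
  induction A' using Finset.strongInduction with
  | _ A' ih =>
    intro A hAA' hA'B h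
    by_cases heq : A' = A
    · rw [heq]; exact h
    · have hss : A ⊂ A' := Finset.ssubset_iff_subset_ne.2 ⟨hAA', fun hh => heq hh.symm⟩
      obtain ⟨β, hβA', hβA⟩ := Finset.exists_of_ssubset hss
      have herase : A'.erase β ⊂ A' := Finset.erase_ssubset hβA'
      have h1 : A ⊆ A'.erase β := fun x hx =>
        Finset.mem_erase.2 ⟨fun hxe => hβA (hxe ▸ hx), hAA' hx⟩
      have h2 : A'.erase β ⊆ B := (Finset.erase_subset _ _).trans hA'B
      have hmid := ih _ herase A h1 h2 h
      have hstep := pos_step hli hobtuse hBΔ (h2.trans hBΔ) (hA'B hβA')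
        (Finset.notMem_erase β A') hmid
      rw [Finset.insert_erase hβA'] at hstep
      exact hstep

noncomputable def pw (E : Finset V) (γ : V) : V :=
  (‖projPerp (E.erase γ) γ‖ ^ 2)⁻¹ • projPerp (E.erase γ) γ

lemma pw_mem_span {E : Finset V} {γ : V} (hγ : γ ∈ E) :
    pw E γ ∈ Submodule.span ℝ (E : Set V) :=
  Submodule.smul_mem _ _ (projPerp_mem_span (Finset.erase_subset γ E) hγ)

lemma pw_mem_orth {A E : Finset V} {γ : V} (hA : A ⊆ E.erase γ) :
    pw E γ ∈ (Submodule.span ℝ (A : Set V))ᗮ := by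
  apply Submodule.smul_mem
  have hle : Submodule.span ℝ (A : Set V) ≤ Submodule.span ℝ ((E.erase γ : Finset V) : Set V) :=
    Submodule.span_mono (by exact_mod_cast hA)
  exact Submodule.orthogonal_le hle (projPerp_mem_orth _ γ)

lemma subset_erase_of {A E : Finset V} {γ : V} (hAE : A ⊆ E) (hγA : γ ∉ A) :
    A ⊆ E.erase γ := fun x hx =>
  Finset.mem_erase.2 ⟨fun hxe => hγA (hxe ▸ hx), hAE hx⟩

lemma pw_dual {Δ : Finset V}
    (hli : LinearIndependent ℝ ((↑) : ↥(Δ : Set V) → V))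
    {A E : Finset V} (hAE : A ⊆ E) (hEΔ : E ⊆ Δ) {γ δ : V}
    (hγ : γ ∈ E) (hγA : γ ∉ A) (hδ : δ ∈ E) (hδA : δ ∉ A) :
    ⟪pw E γ, projPerp A δ⟫ = if δ = γ then 1 else 0 := by
  have hAe : A ⊆ E.erase γ := subset_erase_of hAE hγA
  by_cases h : δ = γ
  · subst h
    rw [if_pos rfl]
    have hδ0 : projPerp (E.erase δ) δ ≠ 0 :=
      projPerp_ne_zero hli ((Finset.erase_subset _ _).trans hEΔ) (hEΔ hδ)
        (Finset.notMem_erase _ _)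
    unfold pw
    rw [real_inner_smul_left]
    have hsplit : ⟪projPerp (E.erase δ) δ, projPerp A δ⟫ = ‖projPerp (E.erase δ) δ‖ ^ 2 := by
      have h0 : ⟪projPerp (E.erase δ) δ, projPerp A δ - projPerp (E.erase δ) δ⟫ = 0 :=
        inner_projPerp_left_zero _ (projPerp_sub_mem hAe δ)
      have h1 := real_inner_self_eq_norm_sq (projPerp (E.erase δ) δ)
      rw [inner_sub_right] at h0
      linarith
    rw [hsplit]
    have hnz : ‖projPerp (E.erase δ) δ‖ ≠ 0 := norm_ne_zero_iff.2 hδ0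
    field_simp
  · rw [if_neg h]
    unfold pw
    rw [real_inner_smul_left]
    have h0 : ⟪projPerp (E.erase γ) γ, projPerp A δ⟫ = 0 := by
      apply inner_projPerp_left_zero
      exact projPerp_mem_span hAe (Finset.mem_erase.2 ⟨h, hδ⟩)
    rw [h0]
    ring

lemma inf_le_span_projPerp {A B : Finset V} (hAB : A ⊆ B) :
    Submodule.span ℝ (B : Set V) ⊓ (Submodule.span ℝ (A : Set V))ᗮ ≤
      Submodule.span ℝ (projPerp A '' ((B \ A : Finset V) : Set V)) := by
  intro v hv
  obtain ⟨hvB, hvA⟩ := hv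
  set S := Submodule.span ℝ (projPerp A '' ((B \ A : Finset V) : Set V)) with hS
  have hBle : Submodule.span ℝ (B : Set V) ≤ Submodule.span ℝ (A : Set V) ⊔ S := by
    rw [Submodule.span_le]
    intro β hβ
    by_cases hβA : β ∈ A
    · exact Submodule.mem_sup_left (Submodule.subset_span hβA)
    · have h1 : β - projPerp A β ∈ Submodule.span ℝ (A : Set V) := sub_projPerp_mem A β
      have h2 : projPerp A β ∈ S := Submodule.subset_span
        ⟨β, by simpa using ⟨hβ, hβA⟩, rfl⟩
      have h3 : β = (β - projPerp A β) + projPerp A β := by abel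
      rw [h3]
      exact Submodule.add_mem_sup h1 h2
  obtain ⟨a, ha, s, hs, hvas⟩ := Submodule.mem_sup.1 (hBle hvB)
  have hSorth : S ≤ (Submodule.span ℝ (A : Set V))ᗮ := by
    rw [hS, Submodule.span_le]
    rintro x ⟨β, hβ, rfl⟩
    exact projPerp_mem_orth A β
  have haz : a = 0 := by
    have haorth : a ∈ (Submodule.span ℝ (A : Set V))ᗮ := by
      have hav : a = v - s := by rw [← hvas]; abel
      rw [hav]
      exact Submodule.sub_mem _ hvA (hSorth hs)
    exact (Submodule.disjoint_def.1 (Submodule.orthogonal_disjoint _)) a ha haorth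
  rw [← hvas, haz, zero_add]
  exact hs

lemma repr_pw {Δ : Finset V}
    (hli : LinearIndependent ℝ ((↑) : ↥(Δ : Set V) → V))
    {A B : Finset V} (hAB : A ⊆ B) (hBΔ : B ⊆ Δ) {x : V}
    (hx1 : x ∈ Submodule.span ℝ (B : Set V))
    (hx2 : x ∈ (Submodule.span ℝ (A : Set V))ᗮ) :
    x = ∑ β ∈ B \ A, ⟪x, projPerp A β⟫ • pw B β := by
  set y := ∑ β ∈ B \ A, ⟪x, projPerp A β⟫ • pw B β with hy
  have hy1 : y ∈ Submodule.span ℝ (B : Set V) :=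
    Submodule.sum_mem _ fun β hβ =>
      Submodule.smul_mem _ _ (pw_mem_span (Finset.mem_sdiff.1 hβ).1)
  have hy2 : y ∈ (Submodule.span ℝ (A : Set V))ᗮ :=
    Submodule.sum_mem _ fun β hβ =>
      Submodule.smul_mem _ _ (pw_mem_orth (subset_erase_of hAB (Finset.mem_sdiff.1 hβ).2))
  have horth : ∀ δ ∈ B \ A, ⟪x - y, projPerp A δ⟫ = 0 := by
    intro δ hδ
    have hδ' := Finset.mem_sdiff.1 hδ
    rw [inner_sub_left]
    have hyδ : ⟪y, projPerp A δ⟫ = ⟪x, projPerp A δ⟫ := by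
      rw [hy, sum_inner]
      have hterm : ∀ β ∈ B \ A, ⟪⟪x, projPerp A β⟫ • pw B β, projPerp A δ⟫ =
          if δ = β then ⟪x, projPerp A δ⟫ else 0 := by
        intro β hβ
        have hβ' := Finset.mem_sdiff.1 hβ
        rw [real_inner_smul_left, pw_dual hli hAB hBΔ hβ'.1 hβ'.2 hδ'.1 hδ'.2]
        by_cases hh : δ = β
        · subst hh; simp
        · simp [hh]
      rw [Finset.sum_congr rfl hterm, Finset.sum_ite_eq]
      simp [hδ]
    rw [hyδ]
    ring
  have hxyS : x - y ∈ Submodule.span ℝ (projPerp A '' ((B \ A : Finset V) : Set V)) :=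
    inf_le_span_projPerp hAB ⟨Submodule.sub_mem _ hx1 hy1, Submodule.sub_mem _ hx2 hy2⟩
  have hxyO : x - y ∈ (Submodule.span ℝ (projPerp A '' ((B \ A : Finset V) : Set V)))ᗮ := by
    apply mem_orth_span
    rintro u ⟨β, hβ, rfl⟩
    rw [real_inner_comm]
    exact horth β (by exact_mod_cast hβ)
  have hzero : x - y = 0 := by
    have := hxyO (x - y) hxyS
    exact inner_self_eq_zero.1 this
  have := sub_eq_zero.1 hzero
  exact this

end

section
variable {V : Type*} [NormedAddCommGroup V] [InnerProductSpace ℝ V] [FiniteDimensional ℝ V]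
  [DecidableEq V]

lemma claim1 {Δ : Finset V}
    (hli : LinearIndependent ℝ ((↑) : ↥(Δ : Set V) → V))
    (hobtuse : ∀ α ∈ Δ, ∀ β ∈ Δ, α ≠ β → ⟪α, β⟫ ≤ 0)
    {A B : Finset V} (hAB : A ⊆ B) (hBΔ : B ⊆ Δ) {H : V}
    (h : ∀ γ ∈ B \ A, 0 < ⟪projPerp A γ, H⟫) :
    ∀ γ ∈ B \ A, 0 < ⟪pw B γ, H⟫ := by
  intro γ hγ
  have hγ' := Finset.mem_sdiff.1 hγ
  have hAe : A ⊆ B.erase γ := subset_erase_of hAB hγ'.2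
  have hpos := pos_prop hli hobtuse hBΔ (B.erase γ) A hAe (Finset.erase_subset _ _) h γ
    (Finset.mem_sdiff.2 ⟨hγ'.1, Finset.notMem_erase _ _⟩)
  have hne : projPerp (B.erase γ) γ ≠ 0 :=
    projPerp_ne_zero hli ((Finset.erase_subset _ _).trans hBΔ) (hBΔ hγ'.1)
      (Finset.notMem_erase _ _)
  have hn : (0:ℝ) < ‖projPerp (B.erase γ) γ‖ ^ 2 := by
    have : ‖projPerp (B.erase γ) γ‖ ≠ 0 := norm_ne_zero_iff.2 hne
    positivity
  unfold pw
  rw [real_inner_smul_left]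
  exact mul_pos (inv_pos.2 hn) hpos

lemma claim3 {Δ : Finset V}
    (hli : LinearIndependent ℝ ((↑) : ↥(Δ : Set V) → V))
    (hobtuse : ∀ α ∈ Δ, ∀ β ∈ Δ, α ≠ β → ⟪α, β⟫ ≤ 0)
    {A B C : Finset V} (hAB : A ⊆ B) (hBC : B ⊆ C) (hCΔ : C ⊆ Δ) {H : V}
    (h1 : ∀ γ ∈ B \ A, 0 < ⟪pw B γ, H⟫) (h2 : ∀ γ ∈ C \ B, 0 < ⟪pw C γ, H⟫) :
    ∀ γ ∈ C \ A, 0 < ⟪pw C γ, H⟫ := by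
  intro γ hγ
  have hγ' := Finset.mem_sdiff.1 hγ
  by_cases hγB : γ ∈ B
  swap
  · exact h2 γ (Finset.mem_sdiff.2 ⟨hγ'.1, hγB⟩)
  -- γ ∈ B \ A
  have hBΔ : B ⊆ Δ := hBC.trans hCΔ
  have hAC : A ⊆ C := hAB.trans hBC
  set w := pw C γ with hw
  set u := pw B γ with hu
  have hγA : γ ∉ A := hγ'.2
  have hwA : w ∈ (Submodule.span ℝ (A : Set V))ᗮ := pw_mem_orth (subset_erase_of hAC hγA)
  have huA : u ∈ (Submodule.span ℝ (A : Set V))ᗮ := pw_mem_orth (subset_erase_of hAB hγA)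
  -- w - u is orthogonal to span B
  have hv_orthB : w - u ∈ (Submodule.span ℝ (B : Set V))ᗮ := by
    apply mem_orth_span
    intro β hβ
    have hβB : β ∈ B := by exact_mod_cast hβ
    by_cases hβA : β ∈ A
    · exact (Submodule.sub_mem _ hwA huA) β (Submodule.subset_span hβA)
    · have e1 : ⟪w, projPerp A β⟫ = if β = γ then 1 else 0 :=
        pw_dual hli hAC hCΔ hγ'.1 hγA (hBC hβB) hβA
      have e2 : ⟪u, projPerp A β⟫ = if β = γ then 1 else 0 :=
        pw_dual hli hAB hBΔ hγB hγA hβB hβA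
      have e3 : ⟪w - u, projPerp A β⟫ = 0 := by rw [inner_sub_left, e1, e2]; ring
      have e4 : ⟪β - projPerp A β, w - u⟫ = 0 :=
        (Submodule.sub_mem _ hwA huA) _ (sub_projPerp_mem A β)
      have e5 : ⟪β, w - u⟫ = ⟪projPerp A β, w - u⟫ + ⟪β - projPerp A β, w - u⟫ := by
        rw [← inner_add_left]
        congr 1
        abel
      rw [e5, e4, real_inner_comm, e3]
      ring
  have hv_spanC : w - u ∈ Submodule.span ℝ (C : Set V) :=
    Submodule.sub_mem _ (pw_mem_span hγ'.1)
      (Submodule.span_mono (by exact_mod_cast hBC) (pw_mem_span hγB))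
  have hrep := repr_pw hli hBC hCΔ hv_spanC hv_orthB
  -- coefficients are nonnegative
  have hcoef : ∀ δ ∈ C \ B, 0 ≤ ⟪w - u, projPerp B δ⟫ := by
    intro δ hδ
    have hδ' := Finset.mem_sdiff.1 hδ
    have hδA : δ ∉ A := fun hh => hδ'.2 (hAB hh)
    have hδγ : δ ≠ γ := fun hh => hδ'.2 (hh ▸ hγB)
    -- ⟪u, projPerp B δ⟫ = 0
    have c1 : ⟪u, projPerp B δ⟫ = 0 := by
      rw [real_inner_comm]
      exact inner_projPerp_left_zero δ (pw_mem_span hγB)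
    -- ⟪w, projPerp A δ⟫ = 0
    have c2 : ⟪w, projPerp A δ⟫ = 0 := by
      have := pw_dual hli hAC hCΔ hγ'.1 hγA hδ'.1 hδA
      rwa [if_neg hδγ] at this
    -- ⟪w - u, projPerp A δ - projPerp B δ⟫ = 0
    have c3 : ⟪projPerp A δ - projPerp B δ, w - u⟫ = 0 :=
      hv_orthB _ (projPerp_sub_mem hAB δ)
    -- ⟪u, projPerp A δ⟫ ≤ 0
    have c4 : ⟪u, projPerp A δ⟫ ≤ 0 := by
      have hAe : A ⊆ B.erase γ := subset_erase_of hAB hγA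
      have heq : ⟪projPerp (B.erase γ) γ, projPerp A δ⟫ =
          ⟪projPerp (B.erase γ) γ, projPerp (B.erase γ) δ⟫ := by
        have h0 := inner_projPerp_left_zero (A := B.erase γ) γ (projPerp_sub_mem hAe δ)
        rw [inner_sub_right] at h0
        linarith
      have hob : ⟪projPerp (B.erase γ) γ, projPerp (B.erase γ) δ⟫ ≤ 0 :=
        obtuse_projPerp hli hobtuse (B.erase γ) ((Finset.erase_subset _ _).trans hBΔ)
          γ (hBΔ hγB) δ (hCΔ hδ'.1) (Finset.notMem_erase _ _)
          (fun hh => hδ'.2 (Finset.mem_of_mem_erase hh)) (fun hh => hδγ hh.symm)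
      have hninv : (0:ℝ) ≤ (‖projPerp (B.erase γ) γ‖ ^ 2)⁻¹ := by positivity
      rw [hu]
      unfold pw
      rw [real_inner_smul_left, heq]
      exact mul_nonpos_iff.2 (Or.inl ⟨hninv, hob⟩)
    -- combine
    have key : ⟪w - u, projPerp B δ⟫ = -⟪u, projPerp A δ⟫ := by
      rw [real_inner_comm] at c3
      rw [inner_sub_left, inner_sub_right, inner_sub_right] at c3
      rw [inner_sub_left]
      linarith [c1, c2]
    rw [key]
    linarith
  -- conclude
  have hsum : 0 ≤ ⟪w - u, H⟫ := by
    rw [hrep, sum_inner]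
    apply Finset.sum_nonneg
    intro δ hδ
    rw [real_inner_smul_left]
    exact mul_nonneg (hcoef δ hδ) (h2 δ hδ).le
  have hfin : ⟪w, H⟫ = ⟪u, H⟫ + ⟪w - u, H⟫ := by
    rw [← inner_add_left]
    congr 1
    abel
  have hu_pos := h1 γ (Finset.mem_sdiff.2 ⟨hγB, hγA⟩)
  rw [hfin]
  linarith

end

section
lemma phi_eq_pw {Δ : Finset V}
    (hli : LinearIndependent ℝ ((↑) : ↥(Δ : Set V) → V))
    {ϖ : Finset V → Finset V → V → V} (hϖ : IsDualFamily Δ ϖ)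
    {A B : Finset V} (hAB : A ⊆ B) (hBΔ : B ⊆ Δ) :
    ∀ γ ∈ B \ A, ϖ A B γ = pw B γ := by
  intro γ hγ
  obtain ⟨hmem, hdual⟩ := hϖ A B hAB hBΔ γ hγ
  have hrep := repr_pw hli hAB hBΔ hmem.1 hmem.2
  rw [hrep]
  have hterm : ∀ β ∈ B \ A, ⟪ϖ A B γ, projPerp A β⟫ • pw B β =
      if β = γ then pw B β else 0 := by
    intro β hβ
    rw [hdual β hβ]
    split_ifs <;> simp
  rw [Finset.sum_congr rfl hterm, Finset.sum_ite_eq', if_pos hγ]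


end

/-- For `A ⊆ B ⊆ C ⊆ Δ` and any `H`:
`τ_A^B(H) ≤ τ̂_A^B(H)` and `τ_A^B(H)·τ̂_B^C(H) ≤ τ̂_A^B(H)·τ̂_B^C(H) ≤ τ̂_A^C(H)`. -/
theorem stmt_5
    (Δ : Finset V)
    (hli : LinearIndependent ℝ ((↑) : ↥(Δ : Set V) → V))
    (hspan : Submodule.span ℝ (Δ : Set V) = ⊤)
    (hobtuse : ∀ α ∈ Δ, ∀ β ∈ Δ, α ≠ β → ⟪α, β⟫ ≤ 0)
    (ϖ : Finset V → Finset V → V → V) (hϖ : IsDualFamily Δ ϖ)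
    (A B C : Finset V) (hAB : A ⊆ B) (hBC : B ⊆ C) (hCΔ : C ⊆ Δ)
    (H : V) :
    tauFn A B H ≤ tauHatFn ϖ A B H ∧
    tauFn A B H * tauHatFn ϖ B C H ≤ tauHatFn ϖ A B H * tauHatFn ϖ B C H ∧
    tauHatFn ϖ A B H * tauHatFn ϖ B C H ≤ tauHatFn ϖ A C H := by
  have hBΔ : B ⊆ Δ := hBC.trans hCΔ
  have hAC : A ⊆ C := hAB.trans hBC
  have hhat : ∀ (X Y : Finset V), X ⊆ Y → Y ⊆ Δ →
      tauHatFn ϖ X Y H = if ∀ γ ∈ Y \ X, 0 < ⟪pw Y γ, H⟫ then 1 else 0 := by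
    intro X Y hXY hYΔ
    unfold tauHatFn
    refine if_congr ?_ rfl rfl
    constructor
    · intro h γ hγ
      rw [← phi_eq_pw hli hϖ hXY hYΔ γ hγ]
      exact h γ hγ
    · intro h γ hγ
      rw [phi_eq_pw hli hϖ hXY hYΔ γ hγ]
      exact h γ hγ
  rw [hhat A B hAB hBΔ, hhat B C hBC hCΔ, hhat A C hAC hCΔ]
  unfold tauFn
  have h1 : (if ∀ γ ∈ B \ A, 0 < ⟪projPerp A γ, H⟫ then (1:ℝ) else 0) ≤
      (if ∀ γ ∈ B \ A, 0 < ⟪pw B γ, H⟫ then (1:ℝ) else 0) := by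
    by_cases p1 : ∀ γ ∈ B \ A, 0 < ⟪projPerp A γ, H⟫
    · rw [if_pos p1, if_pos (claim1 hli hobtuse hAB hBΔ p1)]
    · rw [if_neg p1]
      split_ifs <;> norm_num
  have h3 : (if ∀ γ ∈ B \ A, 0 < ⟪pw B γ, H⟫ then (1:ℝ) else 0) *
      (if ∀ γ ∈ C \ B, 0 < ⟪pw C γ, H⟫ then (1:ℝ) else 0) ≤
      (if ∀ γ ∈ C \ A, 0 < ⟪pw C γ, H⟫ then (1:ℝ) else 0) := by
    by_cases pab : ∀ γ ∈ B \ A, 0 < ⟪pw B γ, H⟫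
    · by_cases pbc : ∀ γ ∈ C \ B, 0 < ⟪pw C γ, H⟫
      · rw [if_pos pab, if_pos pbc,
          if_pos (claim3 hli hobtuse hAB hBC hCΔ pab pbc)]
        norm_num
      · rw [if_neg pbc]
        split_ifs <;> norm_num
    · rw [if_neg pab]
      split_ifs <;> norm_num
  have hnn : (0:ℝ) ≤ (if ∀ γ ∈ C \ B, 0 < ⟪pw C γ, H⟫ then (1:ℝ) else 0) := by
    split_ifs <;> norm_num
  exact ⟨h1, mul_le_mul_of_nonneg_right h1 hnn, h3⟩
end

section
/- For all subsets P, Q ⊆ S and every w ∈ W, the double coset W_P w W_Q = {p w q : p ∈ W_P, q ∈ W_Q} contains a unique element of minimal length, i.e. a unique element s ∈ W_P w W_Q with ℓ(s) ≤ ℓ(x) for all x ∈ W_P w W_Q. -/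
open List

namespace StmtAux

open CoxeterSystem

variable {B : Type*} {W : Type*} [Group W] {M : CoxeterMatrix B} (cs : CoxeterSystem M W)

local prefix:100 "s" => cs.simple
local prefix:100 "π" => cs.wordProd
local prefix:100 "ℓ" => cs.length

open scoped Classical


theorem my_eraseIdx_append_left {α : Type*} (l₁ l₂ : List α) (j : ℕ) (h : j < l₁.length) :
    (l₁ ++ l₂).eraseIdx j = l₁.eraseIdx j ++ l₂ := by
  rw [eraseIdx_eq_take_drop_succ, eraseIdx_eq_take_drop_succ,
    take_append, drop_append]
  rw [Nat.sub_eq_zero_of_le h.le, Nat.sub_eq_zero_of_le h, take_zero, drop_zero, append_nil,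
    append_assoc]

theorem my_eraseIdx_append_right {α : Type*} (l₁ l₂ : List α) (j : ℕ) (h : l₁.length ≤ j) :
    (l₁ ++ l₂).eraseIdx j = l₁ ++ l₂.eraseIdx (j - l₁.length) := by
  rw [eraseIdx_eq_take_drop_succ, eraseIdx_eq_take_drop_succ,
    take_append, drop_append,
    take_of_length_le h, drop_of_length_le (by omega)]
  rw [show j + 1 - l₁.length = j - l₁.length + 1 by omega, nil_append, append_assoc]

private lemma conj_simple_eq_simple_iff (i : B) (a : W) :
    s i * a * s i = s i ↔ a = s i := by
  constructor
  · intro h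
    have h2 : a * s i = 1 := mul_left_cancel (a := s i)
      (by rw [← mul_assoc, h, mul_one])
    rw [← cs.inv_simple]
    exact eq_inv_of_mul_eq_one_left h2
  · rintro rfl; rw [cs.simple_mul_simple_self, one_mul]

private lemma simple_conj_conj (i : B) (a : W) : s i * (s i * a * s i) * s i = a := by
  rw [← mul_assoc, ← mul_assoc, cs.simple_mul_simple_self, one_mul, mul_assoc,
    cs.simple_mul_simple_self, mul_one]

noncomputable def fperm (i : B) : Equiv.Perm (W × ℤˣ) where
  toFun x := (s i * x.1 * s i, x.2 * (if x.1 = s i then -1 else 1))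
  invFun x := (s i * x.1 * s i, x.2 * (if x.1 = s i then -1 else 1))
  left_inv := by
    rintro ⟨a, ε⟩
    simp only [simple_conj_conj, Prod.mk.injEq, conj_simple_eq_simple_iff, true_and]
    rcases em (a = s i) with h | h <;> simp [h, mul_assoc]
  right_inv := by
    rintro ⟨a, ε⟩
    simp only [simple_conj_conj, Prod.mk.injEq, conj_simple_eq_simple_iff, true_and]
    rcases em (a = s i) with h | h <;> simp [h, mul_assoc]

@[simp] lemma fperm_apply (i : B) (a : W) (ε : ℤˣ) :
    fperm cs i (a, ε) = (s i * a * s i, ε * (if a = s i then -1 else 1)) := rfl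

noncomputable def sgn : List B → W → ℤˣ
  | [], _ => 1
  | i :: l, x => sgn l x * (if x = (π l)⁻¹ * s i * π l then -1 else 1)

@[simp] lemma sgn_nil (x : W) : sgn cs [] x = 1 := rfl
lemma sgn_cons (i : B) (l : List B) (x : W) :
    sgn cs (i :: l) x = sgn cs l x * (if x = (π l)⁻¹ * s i * π l then -1 else 1) := rfl

lemma prod_map_fperm (l : List B) (x : W) (ε : ℤˣ) :
    (l.map (fperm cs)).prod (x, ε) = (π l * x * (π l)⁻¹, ε * sgn cs l x) := by
  induction l generalizing ε with
  | nil => simp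
  | cons i l ih =>
    rw [map_cons, prod_cons, Equiv.Perm.mul_apply, ih, fperm_apply, sgn_cons]
    have hcond : (π l * x * (π l)⁻¹ = s i) ↔ (x = (π l)⁻¹ * s i * π l) := by
      constructor
      · intro h; rw [← h]; group
      · intro h; rw [h]; group
    simp only [Prod.mk.injEq]
    refine ⟨?_, ?_⟩
    · rw [cs.wordProd_cons, mul_inv_rev, cs.inv_simple]; group
    · simp only [hcond]; rw [mul_assoc]

lemma alt_two_mul_succ (i j : B) (m : ℕ) :
    alternatingWord i j (2 * (m + 1)) = i :: j :: alternatingWord i j (2 * m) := by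
  have h1 : 2 * (m + 1) = (2 * m + 1) + 1 := by ring
  rw [h1, alternatingWord_succ', alternatingWord_succ']
  simp [Nat.even_add_one, parity_simps]

lemma wp_alt_succ (i j : B) (k : ℕ) :
    π (alternatingWord i j (k + 1)) =
      (if Even k then s j else s i) * π (alternatingWord i j k) := by
  rw [alternatingWord_succ', cs.wordProd_cons]
  rcases Nat.even_or_odd k with h | h
  · simp [h]
  · simp [h, Nat.not_even_iff_odd.mpr h]

lemma swap_pow (i j : B) (n : ℕ) :
    s j * (s i * s j) ^ n = (s j * s i) ^ n * s j := by
  induction n with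
  | zero => simp
  | succ n ih =>
    rw [pow_succ, pow_succ, ← mul_assoc, ih]
    group

/-- The `k`-th flip element of the dihedral orbit. -/
noncomputable def rdih (i j : B) (k : ℕ) : W :=
  (π (alternatingWord i j k))⁻¹ * π (alternatingWord i j (k + 1))

lemma rdih_eq (i j : B) (k : ℕ) : rdih cs i j k = (s j * s i) ^ k * s j := by
  rcases Nat.even_or_odd k with ⟨a, ha⟩ | ⟨a, ha⟩
  · have h1 : π (alternatingWord i j k) = (s i * s j) ^ (k / 2) := by
      rw [cs.prod_alternatingWord_eq_mul_pow, if_pos ⟨a, ha⟩, one_mul]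
    have h2 : π (alternatingWord i j (k + 1)) = s j * (s i * s j) ^ (k / 2) := by
      rw [cs.prod_alternatingWord_eq_mul_pow, if_neg (by simp [ha, parity_simps]),
        show (k+1)/2 = k/2 by omega]
    rw [rdih, h1, h2, swap_pow, ← mul_assoc, ← inv_pow, mul_inv_rev, cs.inv_simple,
      cs.inv_simple, ← pow_add, show k / 2 + k / 2 = k by omega]
  · have h1 : π (alternatingWord i j k) = s j * (s i * s j) ^ (k / 2) := by
      rw [cs.prod_alternatingWord_eq_mul_pow, if_neg (by simp [ha, parity_simps])]
    have h2 : π (alternatingWord i j (k + 1)) = (s i * s j) ^ (k / 2 + 1) := by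
      rw [cs.prod_alternatingWord_eq_mul_pow, if_pos (by simp [ha, parity_simps]),
        one_mul, show (k+1)/2 = k/2 + 1 by omega]
    rw [rdih, h1, h2, mul_inv_rev, cs.inv_simple, mul_assoc, swap_pow, ← mul_assoc,
      ← inv_pow, mul_inv_rev, cs.inv_simple, cs.inv_simple, ← pow_add,
      show k / 2 + (k / 2 + 1) = k by omega]

lemma rdih_add_M (i j : B) (k : ℕ) : rdih cs i j (k + M i j) = rdih cs i j k := by
  rw [rdih_eq, rdih_eq, pow_add, mul_assoc,
    cs.simple_mul_simple_pow' i j, one_mul]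

-- new material
lemma pow_eq_prod_alt (i j : B) (m : ℕ) :
    (fperm cs i * fperm cs j) ^ m = ((alternatingWord i j (2 * m)).map (fperm cs)).prod := by
  induction m with
  | zero => simp [alternatingWord]
  | succ m ih =>
    rw [alt_two_mul_succ, map_cons, map_cons, prod_cons, prod_cons, ← ih, pow_succ']
    rw [mul_assoc]

lemma sgn_alt (i j : B) (n : ℕ) (x : W) :
    sgn cs (alternatingWord i j n) x
      = ∏ k ∈ Finset.range n, (if x = rdih cs i j k then -1 else 1) := by
  induction n with
  | zero => simp [alternatingWord, sgn_nil]
  | succ n ih =>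
    have h2 : (π (alternatingWord i j n))⁻¹ * cs.simple (if Even n then j else i)
        * π (alternatingWord i j n) = rdih cs i j n := by
      rw [rdih, alternatingWord_succ', cs.wordProd_cons, mul_assoc]
    rw [alternatingWord_succ', sgn_cons, Finset.prod_range_succ, ih, h2]

lemma fperm_liftable : M.IsLiftable (fperm cs) := by
  intro i j
  apply Equiv.ext
  rintro ⟨x, ε⟩
  rw [pow_eq_prod_alt, prod_map_fperm]
  have h1 : π (alternatingWord i j (2 * M i j)) = 1 := by
    rw [cs.prod_alternatingWord_eq_mul_pow, if_pos (by simp [Nat.even_mul]),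
      one_mul, show 2 * M i j / 2 = M i j by omega, cs.simple_mul_simple_pow]
  have h2 : sgn cs (alternatingWord i j (2 * M i j)) x = 1 := by
    rw [sgn_alt, two_mul, Finset.prod_range_add, ← Finset.prod_mul_distrib]
    apply Finset.prod_eq_one
    intro k _
    rw [add_comm (M i j) k, rdih_add_M]
    rcases em (x = rdih cs i j k) with h | h <;> simp [h]
  rw [h1, h2]
  simp

noncomputable def Phi : W →* Equiv.Perm (W × ℤˣ) := cs.lift ⟨fperm cs, fperm_liftable cs⟩

lemma Phi_wordProd (l : List B) : Phi cs (π l) = (l.map (fperm cs)).prod := by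
  unfold CoxeterSystem.wordProd
  rw [map_list_prod, List.map_map]
  congr 1
  apply List.map_congr_left
  intro i _
  exact cs.lift_apply_simple (fperm_liftable cs) i

noncomputable def eta (w x : W) : ℤˣ := ((Phi cs w) (x, 1)).2

lemma Phi_apply (w x : W) (ε : ℤˣ) : Phi cs w (x, ε) = (w * x * w⁻¹, ε * eta cs w x) := by
  obtain ⟨l, hl⟩ := cs.wordProd_surjective w
  subst hl
  rw [Phi_wordProd, prod_map_fperm, eta, Phi_wordProd, prod_map_fperm]
  simp

lemma eta_mul (u v x : W) : eta cs (u * v) x = eta cs v x * eta cs u (v * x * v⁻¹) := by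
  have h1 : Phi cs (u * v) (x, 1) = ((u * v) * x * (u * v)⁻¹, 1 * eta cs (u * v) x) :=
    Phi_apply cs (u * v) x 1
  have h2 : Phi cs (u * v) (x, 1) = (u * (v * x * v⁻¹) * u⁻¹,
      (1 * eta cs v x) * eta cs u (v * x * v⁻¹)) := by
    rw [map_mul, Equiv.Perm.mul_apply, Phi_apply, Phi_apply]
  have := h1.symm.trans h2
  have h3 := congrArg Prod.snd this
  simpa using h3

lemma eta_one (x : W) : eta cs 1 x = 1 := by
  rw [eta, map_one]; rfl

lemma eta_simple (i : B) (x : W) : eta cs (s i) x = if x = s i then -1 else 1 := by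
  rw [eta, show Phi cs (s i) = fperm cs i from cs.lift_apply_simple (fperm_liftable cs) i,
    fperm_apply]
  simp

lemma eta_eq_one_of_not_mem (ω : List B) (x : W) (h : x ∉ cs.rightInvSeq ω) :
    eta cs (π ω) x = 1 := by
  induction ω with
  | nil => simpa using eta_one cs x
  | cons i ω ih =>
    simp only [CoxeterSystem.rightInvSeq, List.mem_cons, not_or] at h
    obtain ⟨h1, h2⟩ := h
    rw [cs.wordProd_cons, eta_mul, ih h2, one_mul, eta_simple, if_neg]
    intro hc
    exact h1 (by rw [← hc]; group)

lemma eta_refl {t : W} (ht : cs.IsReflection t) : eta cs t t = -1 := by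
  obtain ⟨c, a, rfl⟩ := ht
  set t := c * s a * c⁻¹ with hts
  have key1 : (s a * c⁻¹) * t * (s a * c⁻¹)⁻¹ = s a := by
    rw [hts, mul_inv_rev, inv_inv, cs.inv_simple]
    calc s a * c⁻¹ * (c * s a * c⁻¹) * (c * s a)
        = s a * (c⁻¹ * c) * s a * (c⁻¹ * c) * s a := by group
      _ = s a := by simp [mul_assoc, cs.simple_mul_simple_self]
  have key2 : c⁻¹ * t * c⁻¹⁻¹ = s a := by rw [hts]; group
  have h1 : eta cs t t = eta cs (s a * c⁻¹) t * eta cs c (s a) := by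
    have h : t = c * (s a * c⁻¹) := by rw [hts, mul_assoc]
    nth_rewrite 1 [h]
    rw [eta_mul, key1]
  have h2 : eta cs (s a * c⁻¹) t = eta cs c⁻¹ t * -1 := by
    rw [eta_mul, key2, eta_simple, if_pos rfl]
  have h3 : eta cs c (s a) * eta cs c⁻¹ t = 1 := by
    rw [hts, ← eta_mul, inv_mul_cancel, eta_one]
  calc eta cs t t = eta cs c⁻¹ t * -1 * eta cs c (s a) := by rw [h1, h2]
    _ = -1 * (eta cs c⁻¹ t * eta cs c (s a)) := by
        rw [mul_comm _ (-1 : ℤˣ), mul_assoc]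
    _ = -1 * (eta cs c (s a) * eta cs c⁻¹ t) := by rw [mul_comm (eta cs c⁻¹ t)]
    _ = -1 := by rw [h3, mul_one]

lemma eta_of_inversion {w t : W} (ht : cs.IsReflection t) (h : ℓ (w * t) < ℓ w) :
    eta cs w t = -1 := by
  rcases Int.units_eq_one_or (eta cs w t) with h1 | h1
  · exfalso
    have hv : eta cs (w * t) t = -1 := by
      have e : t * t * t⁻¹ = t := by rw [ht.mul_self, one_mul, ht.inv]
      rw [eta_mul, eta_refl cs ht, e, h1, mul_one]
    obtain ⟨ω, hred, hw⟩ := cs.exists_reduced_word' (w * t)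
    have hmem : t ∈ cs.rightInvSeq ω := by
      by_contra hc
      rw [hw, eta_eq_one_of_not_mem cs ω t hc] at hv
      exact absurd hv (by decide)
    have hinv := cs.isRightInversion_of_mem_rightInvSeq hred hmem
    rw [← hw] at hinv
    have h2 : ℓ (w * t * t) < ℓ (w * t) := hinv.2
    rw [mul_assoc, ht.mul_self, mul_one] at h2
    omega
  · exact h1

lemma right_exchange {w t : W} (ht : cs.IsReflection t) (h : ℓ (w * t) < ℓ w)
    {ω : List B} (hred : cs.IsReduced ω) (hw : w = π ω) :
    ∃ j < ω.length, w * t = π (ω.eraseIdx j) := by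
  have h1 : eta cs w t = -1 := eta_of_inversion cs ht h
  have hmem : t ∈ cs.rightInvSeq ω := by
    by_contra hc
    rw [hw, eta_eq_one_of_not_mem cs ω t hc] at h1
    exact absurd h1 (by decide)
  obtain ⟨j, hj, hget⟩ := List.getElem_of_mem hmem
  have hjlen : j < ω.length := by
    rwa [cs.length_rightInvSeq] at hj
  refine ⟨j, hjlen, ?_⟩
  have := cs.wordProd_mul_getD_rightInvSeq ω j
  rw [List.getD_eq_getElem _ _ hj, hget] at this
  rw [hw, this]

lemma left_exchange {w t : W} (ht : cs.IsReflection t) (h : ℓ (t * w) < ℓ w)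
    {ω : List B} (hred : cs.IsReduced ω) (hw : w = π ω) :
    ∃ j < ω.length, t * w = π (ω.eraseIdx j) := by
  have h1 : ℓ (w⁻¹ * t) < ℓ w⁻¹ := by
    have e : (w⁻¹ * t)⁻¹ = t * w := by rw [mul_inv_rev, inv_inv, ht.inv]
    rw [← cs.length_inv (w⁻¹ * t), e, cs.length_inv]
    exact h
  have h2 : eta cs w⁻¹ t = -1 := eta_of_inversion cs ht h1
  have hredrev : cs.IsReduced ω.reverse := (cs.isReduced_reverse_iff ω).mpr hred
  have hwrev : π ω.reverse = w⁻¹ := by rw [cs.wordProd_reverse, ← hw]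
  have hmem : t ∈ cs.rightInvSeq ω.reverse := by
    by_contra hc
    rw [← hwrev, eta_eq_one_of_not_mem cs ω.reverse t hc] at h2
    exact absurd h2 (by decide)
  rw [cs.rightInvSeq_reverse, List.mem_reverse] at hmem
  obtain ⟨j, hj, hget⟩ := List.getElem_of_mem hmem
  have hjlen : j < ω.length := by rwa [cs.length_leftInvSeq] at hj
  refine ⟨j, hjlen, ?_⟩
  have := cs.getD_leftInvSeq_mul_wordProd ω j
  rw [List.getD_eq_getElem _ _ hj, hget] at this
  rw [hw, this]

lemma exists_word (P : Set B) {a : W} (ha : a ∈ Subgroup.closure (cs.simple '' P)) :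
    ∃ l : List B, (∀ c ∈ l, c ∈ P) ∧ a = π l := by
  induction ha using Subgroup.closure_induction with
  | mem x hx =>
    obtain ⟨c, hc, rfl⟩ := hx
    exact ⟨[c], by simpa using hc, by simp⟩
  | one => exact ⟨[], by simp, by simp⟩
  | mul x y hx hy ihx ihy =>
    obtain ⟨l₁, h₁, rfl⟩ := ihx
    obtain ⟨l₂, h₂, rfl⟩ := ihy
    refine ⟨l₁ ++ l₂, ?_, (cs.wordProd_append l₁ l₂).symm⟩
    intro c hc
    rcases List.mem_append.mp hc with h | h
    exacts [h₁ c h, h₂ c h]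
  | inv x hx ihx =>
    obtain ⟨l, h, rfl⟩ := ihx
    exact ⟨l.reverse, by intro c hc; exact h c (List.mem_reverse.mp hc),
      (cs.wordProd_reverse l).symm⟩

lemma word_mem (P : Set B) (l : List B) (h : ∀ c ∈ l, c ∈ P) :
    π l ∈ Subgroup.closure (cs.simple '' P) := by
  induction l with
  | nil => simp only [cs.wordProd_nil]; exact one_mem _
  | cons i l ih =>
    rw [cs.wordProd_cons]
    exact mul_mem (Subgroup.subset_closure ⟨i, h i (List.mem_cons_self), rfl⟩)
      (ih fun c hc => h c (List.mem_cons_of_mem i hc))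

lemma reduce_word (P : Set B) : ∀ (n : ℕ) (l : List B), l.length = n → (∀ c ∈ l, c ∈ P) →
    ∃ l', (∀ c ∈ l', c ∈ P) ∧ π l' = π l ∧ l'.length = ℓ (π l) := by
  intro n
  induction n using Nat.strong_induction_on with
  | _ n ih =>
  intro l hlen hP
  by_cases hred : cs.IsReduced l
  · exact ⟨l, hP, rfl, hred.symm⟩
  · have hlt : ℓ (π l) < l.length :=
      lt_of_le_of_ne (cs.length_wordProd_le l) hred
    have hne : l ≠ [] := by
      rintro rfl
      simp [CoxeterSystem.IsReduced] at hred
    have hex : ∃ k, ¬ cs.IsReduced (l.take (k + 1)) := by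
      refine ⟨l.length - 1, ?_⟩
      rwa [show l.length - 1 + 1 = l.length by
        have := List.length_pos_iff.mpr hne; omega, List.take_of_length_le (le_refl _)]
    set k := Nat.find hex with hkdef
    have hk : ¬ cs.IsReduced (l.take (k + 1)) := Nat.find_spec hex
    have hk_lt : k < l.length := by
      have : k ≤ l.length - 1 := Nat.find_min' hex (by
        rwa [show l.length - 1 + 1 = l.length by
          have := List.length_pos_iff.mpr hne; omega, List.take_of_length_le (le_refl _)])
      have := List.length_pos_iff.mpr hne
      omega
    have hredk : cs.IsReduced (l.take k) := by
      rcases Nat.eq_zero_or_pos k with h0 | h0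
      · simp [h0, CoxeterSystem.IsReduced]
      · have := Nat.find_min hex (m := k - 1) (by omega)
        push_neg at this
        rwa [show k - 1 + 1 = k by omega] at this
    have htake : l.take (k + 1) = l.take k ++ [l[k]] := by
      rw [← List.take_concat_get hk_lt, List.concat_eq_append]
    have hπtake : π (l.take (k + 1)) = π (l.take k) * s (l[k]) := by
      rw [htake, cs.wordProd_append, cs.wordProd_singleton]
    have hlentake : (l.take k).length = k := by
      rw [List.length_take]; omega
    have hlenk : ℓ (π (l.take k)) = k := by rw [hredk, hlentake]
    have hdesc : ℓ (π (l.take k) * s (l[k])) < ℓ (π (l.take k)) := by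
      rcases cs.length_mul_simple (π (l.take k)) (l[k]) with h | h
      · exfalso
        apply hk
        show ℓ (π (l.take (k+1))) = (l.take (k+1)).length
        rw [hπtake, h, hlenk, List.length_take]
        omega
      · omega
    obtain ⟨j, hj, hexch⟩ := right_exchange cs (cs.isReflection_simple (l[k])) hdesc hredk rfl
    set l' := (l.take k).eraseIdx j ++ l.drop (k + 1) with hl'def
    have hπl' : π l' = π l := by
      conv_rhs => rw [← List.take_append_drop (k+1) l]
      rw [hl'def, cs.wordProd_append, cs.wordProd_append, ← hexch, hπtake]
    have hPl' : ∀ c ∈ l', c ∈ P := by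
      intro c hc
      rcases List.mem_append.mp hc with h | h
      · exact hP c (List.take_subset k l (List.eraseIdx_subset h))
      · exact hP c (List.drop_subset (k+1) l h)
    have hlenl' : l'.length < n := by
      rw [hl'def, List.length_append, List.length_eraseIdx_of_lt (by omega : j < (l.take k).length),
        hlentake, List.length_drop]
      omega
    obtain ⟨l'', hP'', hπ'', hlen''⟩ := ih l'.length hlenl' l' rfl hPl'
    exact ⟨l'', hP'', by rw [hπ'', hπl'], by rw [hlen'', hπl']⟩

lemma exists_reduced_word_P (P : Set B) {a : W} (ha : a ∈ Subgroup.closure (cs.simple '' P)) :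
    ∃ l : List B, (∀ c ∈ l, c ∈ P) ∧ a = π l ∧ l.length = ℓ a := by
  obtain ⟨l, hP, rfl⟩ := exists_word cs P ha
  obtain ⟨l', h1, h2, h3⟩ := reduce_word cs P l.length l rfl hP
  exact ⟨l', h1, h2.symm, h3⟩

lemma left_step (P : Set B) {a : W} (ha : a ∈ Subgroup.closure (cs.simple '' P)) (h1 : a ≠ 1) :
    ∃ c ∈ P, ∃ a' ∈ Subgroup.closure (cs.simple '' P), a = s c * a' ∧ ℓ a' + 1 = ℓ a := by
  obtain ⟨l, hP, rfl, hlen⟩ := exists_reduced_word_P cs P ha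
  cases l with
  | nil => exact absurd (cs.wordProd_nil) h1
  | cons c l' =>
    refine ⟨c, hP c (List.mem_cons_self), π l',
      word_mem cs P l' (fun x hx => hP x (List.mem_cons_of_mem c hx)), cs.wordProd_cons c l', ?_⟩
    have e1 : ℓ (π l') ≤ l'.length := cs.length_wordProd_le l'
    have e2 : ℓ (π (c :: l')) ≤ 1 + ℓ (π l') := by
      rw [cs.wordProd_cons]
      calc ℓ (s c * π l') ≤ ℓ (s c) + ℓ (π l') := cs.length_mul_le _ _
        _ = 1 + ℓ (π l') := by rw [cs.length_simple]
    simp only [List.length_cons] at hlen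
    omega

lemma right_step (Q : Set B) {b : W} (hb : b ∈ Subgroup.closure (cs.simple '' Q)) (h1 : b ≠ 1) :
    ∃ c ∈ Q, ∃ b' ∈ Subgroup.closure (cs.simple '' Q), b = b' * s c ∧ ℓ b' + 1 = ℓ b := by
  obtain ⟨c, hc, a', ha', heq, hlen⟩ := left_step cs Q (inv_mem hb) (inv_ne_one.mpr h1)
  refine ⟨c, hc, a'⁻¹, inv_mem ha', ?_, ?_⟩
  · rw [← inv_inv b, heq, mul_inv_rev, cs.inv_simple]
  · rw [cs.length_inv, ← cs.length_inv b]
    exact hlen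

lemma key_step (n : ℕ)
    (ih : ∀ m < n, ∀ (P Q : Set B) (w d a b : W),
      (∃ p ∈ Subgroup.closure (cs.simple '' P), ∃ q ∈ Subgroup.closure (cs.simple '' Q),
        d = p * w * q) →
      (∀ x : W, (∃ p ∈ Subgroup.closure (cs.simple '' P),
        ∃ q ∈ Subgroup.closure (cs.simple '' Q), x = p * w * q) → ℓ d ≤ ℓ x) →
      a ∈ Subgroup.closure (cs.simple '' P) → b ∈ Subgroup.closure (cs.simple '' Q) →
      ℓ a + ℓ b = m →
      ∃ u ∈ Subgroup.closure (cs.simple '' P), ∃ v ∈ Subgroup.closure (cs.simple '' Q),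
        a * d * b = u * d * v ∧ ℓ (a * d * b) = ℓ u + ℓ d + ℓ v)
    (P Q : Set B) (w d a b : W)
    (hd : ∃ p ∈ Subgroup.closure (cs.simple '' P), ∃ q ∈ Subgroup.closure (cs.simple '' Q),
      d = p * w * q)
    (hmin : ∀ x : W, (∃ p ∈ Subgroup.closure (cs.simple '' P),
      ∃ q ∈ Subgroup.closure (cs.simple '' Q), x = p * w * q) → ℓ d ≤ ℓ x)
    (ha : a ∈ Subgroup.closure (cs.simple '' P)) (hb : b ∈ Subgroup.closure (cs.simple '' Q))
    (hn : ℓ a + ℓ b = n) (hA : a ≠ 1) :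
    ∃ u ∈ Subgroup.closure (cs.simple '' P), ∃ v ∈ Subgroup.closure (cs.simple '' Q),
      a * d * b = u * d * v ∧ ℓ (a * d * b) = ℓ u + ℓ d + ℓ v := by
  obtain ⟨c, hcP, a', ha', haeq, halen⟩ := left_step cs P ha hA
  have hm : ℓ a' + ℓ b < n := by omega
  obtain ⟨u', hu', v', hv', heq', hlen'⟩ :=
    ih (ℓ a' + ℓ b) hm P Q w d a' b hd hmin ha' hb rfl
  have hx : a * d * b = s c * (a' * d * b) := by rw [haeq]; group
  have hscmem : s c ∈ Subgroup.closure (cs.simple '' P) :=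
    Subgroup.subset_closure ⟨c, hcP, rfl⟩
  rcases cs.length_simple_mul (a' * d * b) c with hup | hdown
  · -- length goes up
    refine ⟨s c * u', mul_mem hscmem hu', v', hv', ?_, ?_⟩
    · rw [hx, heq']; group
    · have e1 : ℓ (s c * u') ≤ 1 + ℓ u' := by
        calc ℓ (s c * u') ≤ ℓ (s c) + ℓ u' := cs.length_mul_le _ _
          _ = 1 + ℓ u' := by rw [cs.length_simple]
      have e2 : ℓ (a * d * b) ≤ ℓ (s c * u') + ℓ d + ℓ v' := by
        have h3 : a * d * b = (s c * u') * d * v' := by rw [hx, heq']; group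
        rw [h3]
        calc ℓ ((s c * u') * d * v') ≤ ℓ ((s c * u') * d) + ℓ v' := cs.length_mul_le _ _
          _ ≤ ℓ (s c * u') + ℓ d + ℓ v' := by
              have := cs.length_mul_le (s c * u') d; omega
      have e3 : ℓ (a * d * b) = ℓ (a' * d * b) + 1 := by rw [hx, hup]
      omega
  · -- length goes down
    have hdesc : ℓ (s c * (a' * d * b)) < ℓ (a' * d * b) := by omega
    obtain ⟨ω₁, hω₁P, hu'eq, hω₁len⟩ := exists_reduced_word_P cs P hu'
    obtain ⟨ω₂, hω₂len, hdeq⟩ := cs.exists_reduced_word d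
    have hω₂len : ω₂.length = ℓ d := by rw [hdeq]; exact hω₂len.symm
    obtain ⟨ω₃, hω₃Q, hv'eq, hω₃len⟩ := exists_reduced_word_P cs Q hv'
    have hπ : π ((ω₁ ++ ω₂) ++ ω₃) = a' * d * b := by
      rw [cs.wordProd_append, cs.wordProd_append, ← hu'eq, ← hdeq, ← hv'eq, heq']
    have hωlen : ((ω₁ ++ ω₂) ++ ω₃).length = ℓ u' + ℓ d + ℓ v' := by
      simp [hω₁len, hω₂len, hω₃len]; omega
    have hred : cs.IsReduced ((ω₁ ++ ω₂) ++ ω₃) := by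
      show ℓ (π ((ω₁ ++ ω₂) ++ ω₃)) = _
      rw [hπ, hωlen, hlen']
    obtain ⟨j, hj, hexch⟩ :=
      left_exchange cs (cs.isReflection_simple c) hdesc hred hπ.symm
    rw [List.length_append, List.length_append] at hj
    by_cases hj1 : j < ω₁.length
    · -- erase within ω₁
      have he : ((ω₁ ++ ω₂) ++ ω₃).eraseIdx j = ((ω₁.eraseIdx j ++ ω₂) ++ ω₃) := by
        rw [my_eraseIdx_append_left _ _ j (by rw [List.length_append]; omega),
          my_eraseIdx_append_left _ _ j hj1]
      set u'' := π (ω₁.eraseIdx j) with hu''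
      have hequ : a * d * b = u'' * d * v' := by
        rw [hx, hexch, he, cs.wordProd_append, cs.wordProd_append, ← hdeq, ← hv'eq]
      refine ⟨u'', word_mem cs P _ (fun x hxx => hω₁P x (List.eraseIdx_subset hxx)),
        v', hv', hequ, ?_⟩
      have e1 : ℓ u'' ≤ ω₁.length - 1 := by
        have := cs.length_wordProd_le (ω₁.eraseIdx j)
        rw [List.length_eraseIdx_of_lt hj1] at this
        exact this
      have e2 : ℓ (a * d * b) ≤ ℓ u'' + ℓ d + ℓ v' := by
        rw [hequ]
        calc ℓ (u'' * d * v') ≤ ℓ (u'' * d) + ℓ v' := cs.length_mul_le _ _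
          _ ≤ ℓ u'' + ℓ d + ℓ v' := by have := cs.length_mul_le u'' d; omega
      have e3 : ℓ (a * d * b) + 1 = ℓ (a' * d * b) := by rw [hx]; exact hdown
      omega
    · by_cases hj2 : j < ω₁.length + ω₂.length
      · -- erase within ω₂ : contradiction with minimality of d
        exfalso
        have he : ((ω₁ ++ ω₂) ++ ω₃).eraseIdx j
            = ((ω₁ ++ ω₂.eraseIdx (j - ω₁.length)) ++ ω₃) := by
          rw [my_eraseIdx_append_left _ _ j (by rw [List.length_append]; omega),
            my_eraseIdx_append_right _ _ j (by omega)]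
        set d'' := π (ω₂.eraseIdx (j - ω₁.length)) with hd''
        have hequ : a * d * b = u' * d'' * v' := by
          rw [hx, hexch, he, cs.wordProd_append, cs.wordProd_append, ← hu'eq, ← hv'eq]
        obtain ⟨p₀, hp₀, q₀, hq₀, hd0⟩ := hd
        have hd''eq : d'' = (u'⁻¹ * (a * p₀)) * w * ((q₀ * b) * v'⁻¹) := by
          have h5 : d'' = u'⁻¹ * (a * d * b) * v'⁻¹ := by rw [hequ]; group
          rw [h5, hd0]; group
        have hd''mem : ℓ d ≤ ℓ d'' := by
          apply hmin
          exact ⟨u'⁻¹ * (a * p₀), mul_mem (inv_mem hu') (mul_mem ha hp₀),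
            (q₀ * b) * v'⁻¹, mul_mem (mul_mem hq₀ hb) (inv_mem hv'), hd''eq⟩
        have e1 : ℓ d'' ≤ ω₂.length - 1 := by
          have h6 := cs.length_wordProd_le (ω₂.eraseIdx (j - ω₁.length))
          rw [List.length_eraseIdx_of_lt (by omega)] at h6
          exact h6
        omega
      · -- erase within ω₃
        have he : ((ω₁ ++ ω₂) ++ ω₃).eraseIdx j
            = ((ω₁ ++ ω₂) ++ ω₃.eraseIdx (j - (ω₁.length + ω₂.length))) := by
          rw [my_eraseIdx_append_right _ _ j (by rw [List.length_append]; omega),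
            List.length_append]
        set v'' := π (ω₃.eraseIdx (j - (ω₁.length + ω₂.length))) with hv''
        have hequ : a * d * b = u' * d * v'' := by
          rw [hx, hexch, he, cs.wordProd_append, cs.wordProd_append, ← hu'eq, ← hdeq]
        refine ⟨u', hu', v'',
          word_mem cs Q _ (fun x hxx => hω₃Q x (List.eraseIdx_subset hxx)), hequ, ?_⟩
        have e1 : ℓ v'' ≤ ω₃.length - 1 := by
          have h6 := cs.length_wordProd_le (ω₃.eraseIdx (j - (ω₁.length + ω₂.length)))
          rw [List.length_eraseIdx_of_lt (by omega)] at h6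
          exact h6
        have e2 : ℓ (a * d * b) ≤ ℓ u' + ℓ d + ℓ v'' := by
          rw [hequ]
          calc ℓ (u' * d * v'') ≤ ℓ (u' * d) + ℓ v'' := cs.length_mul_le _ _
            _ ≤ ℓ u' + ℓ d + ℓ v'' := by have := cs.length_mul_le u' d; omega
        have e3 : ℓ (a * d * b) + 1 = ℓ (a' * d * b) := by rw [hx]; exact hdown
        omega

lemma key : ∀ (n : ℕ) (P Q : Set B) (w d a b : W),
    (∃ p ∈ Subgroup.closure (cs.simple '' P), ∃ q ∈ Subgroup.closure (cs.simple '' Q),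
      d = p * w * q) →
    (∀ x : W, (∃ p ∈ Subgroup.closure (cs.simple '' P),
      ∃ q ∈ Subgroup.closure (cs.simple '' Q), x = p * w * q) → ℓ d ≤ ℓ x) →
    a ∈ Subgroup.closure (cs.simple '' P) → b ∈ Subgroup.closure (cs.simple '' Q) →
    ℓ a + ℓ b = n →
    ∃ u ∈ Subgroup.closure (cs.simple '' P), ∃ v ∈ Subgroup.closure (cs.simple '' Q),
      a * d * b = u * d * v ∧ ℓ (a * d * b) = ℓ u + ℓ d + ℓ v := by
  intro n
  induction n using Nat.strong_induction_on with
  | _ n ih =>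
  intro P Q w d a b hd hmin ha hb hn
  by_cases hA : a = 1
  · by_cases hB : b = 1
    · subst hA; subst hB
      exact ⟨1, one_mem _, 1, one_mem _, by simp, by simp⟩
    · -- use the symmetric (inverted) configuration
      obtain ⟨p₀, hp₀, q₀, hq₀, hd0⟩ := hd
      have hdinv : ∃ p ∈ Subgroup.closure (cs.simple '' Q),
          ∃ q ∈ Subgroup.closure (cs.simple '' P), d⁻¹ = p * w⁻¹ * q :=
        ⟨q₀⁻¹, inv_mem hq₀, p₀⁻¹, inv_mem hp₀, by rw [hd0]; group⟩
      have hmininv : ∀ x : W, (∃ p ∈ Subgroup.closure (cs.simple '' Q),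
          ∃ q ∈ Subgroup.closure (cs.simple '' P), x = p * w⁻¹ * q) → ℓ d⁻¹ ≤ ℓ x := by
        rintro x ⟨q', hq', p', hp', hxeq⟩
        have h1 : x⁻¹ = p'⁻¹ * w * q'⁻¹ := by rw [hxeq]; group
        have h2 : ℓ d ≤ ℓ x⁻¹ := hmin x⁻¹ ⟨p'⁻¹, inv_mem hp', q'⁻¹, inv_mem hq', h1⟩
        rwa [cs.length_inv, ← cs.length_inv x]
      obtain ⟨u, hu, v, hv, hueq, hulen⟩ :=
        key_step cs n (fun m hm P' Q' w' d' a' b' => ih m hm P' Q' w' d' a' b')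
          Q P w⁻¹ d⁻¹ b⁻¹ a⁻¹ hdinv hmininv (inv_mem hb) (inv_mem ha)
          (by rw [cs.length_inv, cs.length_inv]; omega) (inv_ne_one.mpr hB)
      refine ⟨v⁻¹, inv_mem hv, u⁻¹, inv_mem hu, ?_, ?_⟩
      · have h2 : a * d * b = (b⁻¹ * d⁻¹ * a⁻¹)⁻¹ := by group
        rw [h2, hueq]; group
      · have h3 : ℓ (a * d * b) = ℓ (b⁻¹ * d⁻¹ * a⁻¹) := by
          rw [← cs.length_inv (b⁻¹ * d⁻¹ * a⁻¹)]
          congr 1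
          group
        rw [h3, hueq, ← hueq, hulen, cs.length_inv, cs.length_inv, cs.length_inv]
        omega
  · exact key_step cs n (fun m hm => ih m hm) P Q w d a b hd hmin ha hb hn hA

end StmtAux


/-- In a Coxeter system `(W, S)`, for all subsets `P, Q ⊆ S` and every
`w ∈ W`, the double coset `W_P w W_Q` contains a unique element of minimal length. -/
theorem stmt_13 {B : Type*} {W : Type*} [Group W] {M : CoxeterMatrix B}
    (cs : CoxeterSystem M W) (P Q : Set B) (w : W) :
    ∃! s : W,
      (∃ p ∈ Subgroup.closure (cs.simple '' P), ∃ q ∈ Subgroup.closure (cs.simple '' Q),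
        s = p * w * q) ∧
      ∀ x : W,
        (∃ p ∈ Subgroup.closure (cs.simple '' P), ∃ q ∈ Subgroup.closure (cs.simple '' Q),
          x = p * w * q) →
        cs.length s ≤ cs.length x := by
  classical
  set D : W → Prop := fun x => ∃ p ∈ Subgroup.closure (cs.simple '' P),
    ∃ q ∈ Subgroup.closure (cs.simple '' Q), x = p * w * q with hD
  have hne : ∃ n : ℕ, ∃ x, D x ∧ cs.length x = n :=
    ⟨cs.length w, w, ⟨1, one_mem _, 1, one_mem _, by simp⟩, rfl⟩
  obtain ⟨d, hdD, hdlen⟩ := Nat.find_spec hne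
  have hdmin : ∀ x : W, D x → cs.length d ≤ cs.length x := by
    intro x hx
    rw [hdlen]
    exact Nat.find_min' hne ⟨x, hx, rfl⟩
  refine ⟨d, ⟨hdD, hdmin⟩, ?_⟩
  rintro t ⟨htD, htmin⟩
  -- express t as a * d * b
  obtain ⟨p₀, hp₀, q₀, hq₀, hd0⟩ := id hdD
  obtain ⟨p₁, hp₁, q₁, hq₁, ht1⟩ := id htD
  have htw : t = (p₁ * p₀⁻¹) * d * (q₀⁻¹ * q₁) := by rw [ht1, hd0]; group
  obtain ⟨u, hu, v, hv, hueq, hulen⟩ := StmtAux.key cs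
    (cs.length (p₁ * p₀⁻¹) + cs.length (q₀⁻¹ * q₁)) P Q w d (p₁ * p₀⁻¹) (q₀⁻¹ * q₁)
    hdD hdmin (mul_mem hp₁ (inv_mem hp₀)) (mul_mem (inv_mem hq₀) hq₁) rfl
  rw [← htw] at hueq hulen
  -- t has minimal length, so u = v = 1
  have hle : cs.length t ≤ cs.length d := htmin d hdD
  have hu0 : cs.length u = 0 := by omega
  have hv0 : cs.length v = 0 := by omega
  rw [cs.length_eq_zero_iff] at hu0 hv0
  rw [hueq, hu0, hv0, one_mul, mul_one]
end

section
/- Let s ∈ W and let A ⊆ Δ be a subset. If every β ∈ R(s) lies in the linear span of A, then s belongs to the subgroup W_A generated by the reflections s_α for α ∈ A. -/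
open scoped RealInnerProductSpace Classical

set_option linter.unusedSectionVars false

/-- `β` is a `ℤ`-linear combination of elements of `Δ` with all coefficients `≥ 0`
(for `β` in a root system with base `Δ`, this means `β` is a positive root). -/
def PosComb {V : Type*} [NormedAddCommGroup V] [InnerProductSpace ℝ V]
    (Δ : Finset V) (β : V) : Prop :=
  ∃ c : V → ℤ, (∀ α, 0 ≤ c α) ∧ β = ∑ α ∈ Δ, (c α : ℝ) • α

section Aux

variable {V : Type*} [NormedAddCommGroup V] [InnerProductSpace ℝ V] [FiniteDimensional ℝ V]
variable {R Δ : Finset V} {b : Module.Basis ↥(Δ : Set V) ℝ V} {sref : V → (V ≃ₗᵢ[ℝ] V)}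

lemma repr_comb (hb : ∀ i : ↥(Δ : Set V), (b i : V) = i) (f : V → ℝ) (j) :
    b.repr (∑ α ∈ Δ, f α • α) j = f j := by
  have h : (∑ α ∈ Δ, f α • α) = ∑ i : ↥(Δ : Set V), (fun i : ↥(Δ : Set V) => f i) i • b i := by
    rw [← Finset.sum_finset_coe (fun a => f a • a) Δ]
    exact Finset.sum_congr rfl fun i _ => by rw [hb]
  rw [h, Module.Basis.repr_sum_self]

lemma posComb_repr (hb : ∀ i : ↥(Δ : Set V), (b i : V) = i) {β : V}
    (h : PosComb Δ β) : ∀ j, 0 ≤ b.repr β j := by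
  obtain ⟨c, hc, rfl⟩ := h
  intro j
  rw [repr_comb hb]
  exact_mod_cast hc j

lemma eq_zero_of_pos_neg {β : V} (h1 : ∀ j, 0 ≤ b.repr β j) (h2 : ∀ j, b.repr β j ≤ 0) :
    β = (0 : V) := by
  have h0 : b.repr β = 0 := by
    ext j; exact le_antisymm (h2 j) (h1 j)
  simpa using b.repr.injective (h0.trans (map_zero b.repr).symm)

/-- Dichotomy in coordinate form. -/
lemma dichotomy (hb : ∀ i : ↥(Δ : Set V), (b i : V) = i)
    (hbase : ∀ β ∈ R, PosComb Δ β ∨ PosComb Δ (-β)) {β : V} (hβ : β ∈ R) :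
    (∀ j, 0 ≤ b.repr β j) ∨ (∀ j, b.repr β j ≤ 0) := by
  rcases hbase β hβ with h | h
  · exact Or.inl (posComb_repr hb h)
  · refine Or.inr fun j => ?_
    have := posComb_repr hb h j
    rw [map_neg] at this
    simpa using this

lemma posComb_of_repr (hb : ∀ i : ↥(Δ : Set V), (b i : V) = i) (hR0 : (0:V) ∉ R)
    (hbase : ∀ β ∈ R, PosComb Δ β ∨ PosComb Δ (-β)) {β : V} (hβ : β ∈ R)
    (h : ∀ j, 0 ≤ b.repr β j) : PosComb Δ β := by
  rcases hbase β hβ with h' | h'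
  · exact h'
  · exfalso
    have hneg : ∀ j, b.repr β j ≤ 0 := fun j => by
      have := posComb_repr hb h' j; rw [map_neg] at this; simpa using this
    exact hR0 (eq_zero_of_pos_neg h hneg ▸ hβ)

lemma repr_simple (hb : ∀ i : ↥(Δ : Set V), (b i : V) = i) {α : V} (hα : α ∈ Δ) (j) :
    b.repr α j = if (⟨α, Finset.mem_coe.mpr hα⟩ : ↥(Δ : Set V)) = j then 1 else 0 := by
  have hh := hb ⟨α, Finset.mem_coe.mpr hα⟩
  simp only [Subtype.coe_mk] at hh
  conv_lhs => rw [← hh]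
  rw [b.repr_self, Finsupp.single_apply]

lemma simple_pos (hb : ∀ i : ↥(Δ : Set V), (b i : V) = i) {α : V} (hα : α ∈ Δ) (j) :
    0 ≤ b.repr α j := by
  rw [repr_simple hb hα]
  split <;> norm_num

lemma simple_not_neg (hb : ∀ i : ↥(Δ : Set V), (b i : V) = i) {α : V} (hα : α ∈ Δ) :
    ¬ (∀ j, b.repr α j ≤ 0) := by
  intro h
  have := h ⟨α, Finset.mem_coe.mpr hα⟩
  rw [repr_simple hb hα, if_pos rfl] at this
  linarith


lemma inner_self_ne (hR0 : (0:V) ∉ R) {α : V} (hα : α ∈ R) : ⟪α, α⟫ ≠ (0:ℝ) := by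
  rw [inner_self_ne_zero]
  rintro rfl; exact hR0 hα

lemma sref_invol (hR0 : (0:V) ∉ R)
    (hsref : ∀ α ∈ R, ∀ x : V, sref α x = x - (2 * ⟪x, α⟫ / ⟪α, α⟫) • α)
    {α : V} (hα : α ∈ R) (x : V) : sref α (sref α x) = x := by
  have hne := inner_self_ne hR0 hα
  rw [hsref α hα, hsref α hα]
  rw [inner_sub_left, real_inner_smul_left]
  field_simp
  ring_nf
  module

lemma sref_self (hR0 : (0:V) ∉ R)
    (hsref : ∀ α ∈ R, ∀ x : V, sref α x = x - (2 * ⟪x, α⟫ / ⟪α, α⟫) • α)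
    {α : V} (hα : α ∈ R) : sref α α = -α := by
  have hne := inner_self_ne hR0 hα
  rw [hsref α hα]
  rw [mul_div_assoc, div_self hne]
  module

lemma sref_sq (hR0 : (0:V) ∉ R)
    (hsref : ∀ α ∈ R, ∀ x : V, sref α x = x - (2 * ⟪x, α⟫ / ⟪α, α⟫) • α)
    {α : V} (hα : α ∈ R) : sref α * sref α = 1 := by
  ext x
  exact sref_invol hR0 hsref hα x

lemma sref_conj (hR0 : (0:V) ∉ R)
    (hsref : ∀ α ∈ R, ∀ x : V, sref α x = x - (2 * ⟪x, α⟫ / ⟪α, α⟫) • α)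
    {α : V} (hα : α ∈ R) (u : V ≃ₗᵢ[ℝ] V) (hu : u α ∈ R) :
    sref (u α) = u * sref α * u⁻¹ := by
  ext x
  have hx : u (u⁻¹ x) = x := u.apply_symm_apply x
  show sref (u α) x = u (sref α (u⁻¹ x))
  rw [hsref _ hu, hsref _ hα, map_sub, map_smul, hx]
  have hi : ⟪(u⁻¹ x : V), α⟫ = ⟪x, u α⟫ := by rw [← u.inner_map_map (u⁻¹ x) α, hx]
  have hii : ⟪α, α⟫ = ⟪u α, u α⟫ := (u.inner_map_map α α).symm
  rw [hi, ← hii]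


/-- Humphreys 10.3A: for simple `α`, `sref α` maps positive roots other than `α`
to positive roots. -/
lemma simple_perm (hb : ∀ i : ↥(Δ : Set V), (b i : V) = i) (hR0 : (0:V) ∉ R)
    (hsref : ∀ α ∈ R, ∀ x : V, sref α x = x - (2 * ⟪x, α⟫ / ⟪α, α⟫) • α)
    (hRrefl : ∀ α ∈ R, ∀ β ∈ R, sref α β ∈ R)
    (hRred : ∀ α ∈ R, ∀ c : ℝ, c • α ∈ R → c = 1 ∨ c = -1)
    (hΔR : Δ ⊆ R)
    (hbase : ∀ β ∈ R, PosComb Δ β ∨ PosComb Δ (-β))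
    {α β : V} (hα : α ∈ Δ) (hβ : β ∈ R) (hne : β ≠ α)
    (hpos : ∀ j, 0 ≤ b.repr β j) : ∀ j, 0 ≤ b.repr (sref α β) j := by
  have hαR : α ∈ R := hΔR hα
  set i₀ : ↥(Δ : Set V) := ⟨α, Finset.mem_coe.mpr hα⟩ with hi₀
  -- there is an index j₀ ≠ i₀ with positive coefficient
  have hj₀ : ∃ j₀, j₀ ≠ i₀ ∧ 0 < b.repr β j₀ := by
    by_contra hcon
    push_neg at hcon
    have hzero : ∀ j, j ≠ i₀ → b.repr β j = 0 := fun j hj =>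
      le_antisymm (hcon j hj) (hpos j)
    have hβα : β = b.repr β i₀ • α := by
      have hsum := b.sum_repr β
      rw [Finset.sum_eq_single i₀ (fun j _ hj => by rw [hzero j hj, zero_smul])
        (fun h => absurd (Finset.mem_univ i₀) h), hb i₀] at hsum
      exact hsum.symm
    have hmem' : b.repr β i₀ • α ∈ R := by rw [← hβα]; exact hβ
    rcases hRred α hαR (b.repr β i₀) hmem' with h1 | h1
    · exact hne (by rw [hβα, h1, one_smul])
    · have := hpos i₀; rw [h1] at this; linarith
  obtain ⟨j₀, hj₀ne, hj₀pos⟩ := hj₀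
  -- repr of sref α β agrees with repr β away from i₀
  have hrepr : ∀ j, j ≠ i₀ → b.repr (sref α β) j = b.repr β j := by
    intro j hj
    have h0 : b.repr α j = 0 := by
      rw [repr_simple hb hα, if_neg (fun h => hj h.symm)]
    rw [hsref α hαR β, map_sub, map_smul, Finsupp.sub_apply, Finsupp.smul_apply, h0,
      smul_zero, sub_zero]
  -- sref α β is a root
  have hmem : sref α β ∈ R := hRrefl α hαR β hβ
  rcases dichotomy hb hbase hmem with h | h
  · exact h
  · exfalso
    have := h j₀
    rw [hrepr j₀ hj₀ne] at this
    linarith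

lemma prod_reverse (hR0 : (0:V) ∉ R)
    (hsref : ∀ α ∈ R, ∀ x : V, sref α x = x - (2 * ⟪x, α⟫ / ⟪α, α⟫) • α)
    (hΔR : Δ ⊆ R) :
    ∀ l : List V, (∀ γ ∈ l, γ ∈ Δ) →
      ((l.map sref).prod)⁻¹ = (l.reverse.map sref).prod := by
  intro l
  induction l with
  | nil => simp
  | cons a t ih =>
    intro hl
    rw [List.reverse_cons, List.map_append, List.prod_append, List.map_cons,
      List.prod_cons, mul_inv_rev, ← ih (fun γ hγ => hl γ (List.mem_cons_of_mem a hγ))]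
    simp only [List.map_cons, List.map_nil, List.prod_cons, List.prod_nil, mul_one]
    congr 1
    exact inv_eq_of_mul_eq_one_right (sref_sq hR0 hsref (hΔR (hl a (List.mem_cons_self (a := a) (l := t)))))

/-- every element of the closure is a product of a word in the generators. -/
lemma word_exists (hR0 : (0:V) ∉ R)
    (hsref : ∀ α ∈ R, ∀ x : V, sref α x = x - (2 * ⟪x, α⟫ / ⟪α, α⟫) • α)
    (hΔR : Δ ⊆ R) {s : V ≃ₗᵢ[ℝ] V}
    (hs : s ∈ Subgroup.closure (sref '' (Δ : Set V))) :
    ∃ l : List V, (∀ γ ∈ l, γ ∈ Δ) ∧ s = (l.map sref).prod := by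
  induction hs using Subgroup.closure_induction with
  | mem x hx =>
    obtain ⟨α, hα, rfl⟩ := hx
    exact ⟨[α], by simpa using hα, by simp⟩
  | one => exact ⟨[], by simp, by simp⟩
  | mul x y _ _ ihx ihy =>
    obtain ⟨l₁, h₁, rfl⟩ := ihx
    obtain ⟨l₂, h₂, rfl⟩ := ihy
    refine ⟨l₁ ++ l₂, ?_, by rw [List.map_append, List.prod_append]⟩
    intro γ hγ
    rcases List.mem_append.mp hγ with h | h
    exacts [h₁ γ h, h₂ γ h]
  | inv x _ ihx =>
    obtain ⟨l, hl, rfl⟩ := ihx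
    exact ⟨l.reverse, fun γ hγ => hl γ (List.mem_reverse.mp hγ),
      prod_reverse hR0 hsref hΔR l hl⟩

lemma word_mapsR
    (hRrefl : ∀ α ∈ R, ∀ β ∈ R, sref α β ∈ R)
    (hΔR : Δ ⊆ R) {l : List V} (hl : ∀ γ ∈ l, γ ∈ Δ) :
    ∀ β ∈ R, (l.map sref).prod β ∈ R := by
  induction l with
  | nil => intro β hβ; simpa using hβ
  | cons a t ih =>
    intro β hβ
    rw [List.map_cons, List.prod_cons]
    have ht := ih (fun γ hγ => hl γ (List.mem_cons_of_mem a hγ)) β hβ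
    exact hRrefl a (hΔR (hl a (List.mem_cons_self (a := a) (l := t)))) _ ht


/-- Deletion condition (Humphreys 10.3B). -/
lemma deletion (hb : ∀ i : ↥(Δ : Set V), (b i : V) = i) (hR0 : (0:V) ∉ R)
    (hsref : ∀ α ∈ R, ∀ x : V, sref α x = x - (2 * ⟪x, α⟫ / ⟪α, α⟫) • α)
    (hRrefl : ∀ α ∈ R, ∀ β ∈ R, sref α β ∈ R)
    (hRred : ∀ α ∈ R, ∀ c : ℝ, c • α ∈ R → c = 1 ∨ c = -1)
    (hΔR : Δ ⊆ R)
    (hbase : ∀ β ∈ R, PosComb Δ β ∨ PosComb Δ (-β)) :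
    ∀ l : List V, (∀ γ ∈ l, γ ∈ Δ) → ∀ {α : V}, α ∈ Δ →
      (∀ j, b.repr ((l.map sref).prod α) j ≤ 0) →
      ∃ l' : List V, (∀ γ ∈ l', γ ∈ Δ) ∧ l'.length + 1 = l.length ∧
        (l'.map sref).prod = (l.map sref).prod * sref α := by
  intro l
  induction l with
  | nil =>
    intro _ α hα hneg
    exact absurd (fun j => by simpa using hneg j) (simple_not_neg hb hα)
  | cons a t ih =>
    intro hl α hα hneg
    have haΔ := hl a (List.mem_cons_self (a := a) (l := t))
    have htl := fun γ hγ => hl γ (List.mem_cons_of_mem a hγ)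
    set u := (t.map sref).prod with hu
    have huα : u α ∈ R := word_mapsR hRrefl hΔR htl α (hΔR hα)
    rw [List.map_cons, List.prod_cons] at hneg
    have hneg2 : ∀ j, b.repr (sref a (u α)) j ≤ 0 := hneg
    rcases dichotomy hb hbase huα with hpos | hneg' 
    · -- u α is positive, hence u α = a
      have heq : u α = a := by
        by_contra hne
        have hp := simple_perm hb hR0 hsref hRrefl hRred hΔR hbase haΔ huα hne hpos
        have hz := eq_zero_of_pos_neg hp hneg2
        exact hR0 (hz ▸ hRrefl a (hΔR haΔ) _ huα)
      refine ⟨t, htl, by simp, ?_⟩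
      have hconj : sref (u α) = u * sref α * u⁻¹ :=
        sref_conj hR0 hsref (hΔR hα) u huα
      calc (t.map sref).prod = u := hu.symm
        _ = u * (sref α * sref α) := by rw [sref_sq hR0 hsref (hΔR hα), mul_one]
        _ = ((u * sref α * u⁻¹) * u) * sref α := by group
        _ = (sref (u α) * u) * sref α := by rw [hconj]
        _ = (sref a * u) * sref α := by rw [heq]
        _ = ((a :: t).map sref).prod * sref α := by
            rw [List.map_cons, List.prod_cons]
    · -- u α negative: induction
      obtain ⟨l', hl', hlen, hprod⟩ := ih htl hα hneg'
      refine ⟨a :: l', ?_, by simp [← hlen], ?_⟩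
      · intro γ hγ
        rcases List.mem_cons.mp hγ with rfl | h
        exacts [haΔ, hl' γ h]
      · rw [List.map_cons, List.prod_cons, hprod, List.map_cons, List.prod_cons, mul_assoc]

/-- A word whose product has no inversions is the identity. -/
lemma no_inv_eq_one (hb : ∀ i : ↥(Δ : Set V), (b i : V) = i) (hR0 : (0:V) ∉ R)
    (hsref : ∀ α ∈ R, ∀ x : V, sref α x = x - (2 * ⟪x, α⟫ / ⟪α, α⟫) • α)
    (hRrefl : ∀ α ∈ R, ∀ β ∈ R, sref α β ∈ R)
    (hRred : ∀ α ∈ R, ∀ c : ℝ, c • α ∈ R → c = 1 ∨ c = -1)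
    (hΔR : Δ ⊆ R)
    (hbase : ∀ β ∈ R, PosComb Δ β ∨ PosComb Δ (-β)) :
    ∀ n (l : List V), l.length ≤ n → (∀ γ ∈ l, γ ∈ Δ) →
      (∀ β ∈ R, (∀ j, 0 ≤ b.repr β j) → ¬(∀ j, b.repr ((l.map sref).prod β) j ≤ 0)) →
      (l.map sref).prod = 1 := by
  intro n
  induction n with
  | zero =>
    intro l hlen _ _
    rw [List.length_eq_zero_iff.mp (Nat.le_zero.mp hlen)]
    simp
  | succ n ih =>
    intro l hlen hl hno
    rcases List.eq_nil_or_concat l with rfl | ⟨L, α, rfl⟩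
    · simp
    · rw [List.concat_eq_append] at hlen hl hno ⊢
      have hα : α ∈ Δ := hl α (by simp)
      have hαR := hΔR hα
      have hL : ∀ γ ∈ L, γ ∈ Δ := fun γ hγ => hl γ (by simp [hγ])
      set s := ((L ++ [α]).map sref).prod with hs
      have hsplit : s = (L.map sref).prod * sref α := by
        rw [hs, List.map_append, List.prod_append]
        simp
      have hsαR : s α ∈ R := word_mapsR hRrefl hΔR hl α hαR
      have hsαpos : ∀ j, 0 ≤ b.repr (s α) j := by
        rcases dichotomy hb hbase hsαR with h | h
        · exact h
        · exact absurd h (hno α hαR (simple_pos hb hα))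
      have hLα : (L.map sref).prod α = - (s α) := by
        have h1 : s α = (L.map sref).prod (sref α α) := by rw [hsplit]; rfl
        rw [h1, sref_self hR0 hsref hαR, map_neg, neg_neg]
      have hLneg : ∀ j, b.repr ((L.map sref).prod α) j ≤ 0 := by
        intro j
        rw [hLα, map_neg, Finsupp.neg_apply]
        simpa using hsαpos j
      obtain ⟨l', hl', hlen', hprod⟩ :=
        deletion hb hR0 hsref hRrefl hRred hΔR hbase L hL hα hLneg
      have hps : (l'.map sref).prod = s := by rw [hprod, ← hsplit]
      have hlen'' : l'.length ≤ n := by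
        have : L.length + 1 ≤ n + 1 := by simpa using hlen
        omega
      have := ih l' hlen'' hl' (by rw [hps]; exact hno)
      rw [← hps, this]


lemma main_ind (hb : ∀ i : ↥(Δ : Set V), (b i : V) = i) (hR0 : (0:V) ∉ R)
    (hsref : ∀ α ∈ R, ∀ x : V, sref α x = x - (2 * ⟪x, α⟫ / ⟪α, α⟫) • α)
    (hRrefl : ∀ α ∈ R, ∀ β ∈ R, sref α β ∈ R)
    (hRred : ∀ α ∈ R, ∀ c : ℝ, c • α ∈ R → c = 1 ∨ c = -1)
    (hΔR : Δ ⊆ R)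
    (hbase : ∀ β ∈ R, PosComb Δ β ∨ PosComb Δ (-β))
    (A : Finset V) (hA : A ⊆ Δ) :
    ∀ n (s : V ≃ₗᵢ[ℝ] V), s ∈ Subgroup.closure (sref '' (Δ : Set V)) →
      (R.filter (fun β => (∀ j, 0 ≤ b.repr β j) ∧ (∀ j, b.repr (s β) j ≤ 0))).card ≤ n →
      (∀ β ∈ R, (∀ j, 0 ≤ b.repr β j) → (∀ j, b.repr (s β) j ≤ 0) →
        β ∈ Submodule.span ℝ (A : Set V)) →
      s ∈ Subgroup.closure (sref '' (A : Set V)) := by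
  intro n
  induction n with
  | zero =>
    intro s hs hcard _
    have hempty := Finset.card_eq_zero.mp (Nat.le_zero.mp hcard)
    obtain ⟨l, hl, rfl⟩ := word_exists hR0 hsref hΔR hs
    rw [no_inv_eq_one hb hR0 hsref hRrefl hRred hΔR hbase l.length l le_rfl hl ?_]
    · exact one_mem _
    · intro β hβ hβpos hβneg
      have : β ∈ R.filter (fun β => (∀ j, 0 ≤ b.repr β j) ∧
          (∀ j, b.repr ((l.map sref).prod β) j ≤ 0)) :=
        Finset.mem_filter.mpr ⟨hβ, hβpos, hβneg⟩
      rw [hempty] at this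
      simpa using this
  | succ n ih =>
    intro s hs hcard hspan
    by_cases hcc : (R.filter (fun β => (∀ j, 0 ≤ b.repr β j) ∧
        (∀ j, b.repr (s β) j ≤ 0))).card ≤ n
    · exact ih s hs hcc hspan
    · have hne : (R.filter (fun β => (∀ j, 0 ≤ b.repr β j) ∧
          (∀ j, b.repr (s β) j ≤ 0))).Nonempty := Finset.card_pos.mp (by omega)
      have hsR : ∀ β ∈ R, s β ∈ R := by
        obtain ⟨l, hl, heq⟩ := word_exists hR0 hsref hΔR hs
        rw [heq]
        exact word_mapsR hRrefl hΔR hl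
      -- there is a simple root in the inversion set
      have hexists : ∃ α ∈ Δ, α ∈ R.filter (fun β => (∀ j, 0 ≤ b.repr β j) ∧
          (∀ j, b.repr (s β) j ≤ 0)) := by
        by_contra hcon
        push_neg at hcon
        have hpos : ∀ α ∈ Δ, ∀ j, 0 ≤ b.repr (s α) j := by
          intro α hα
          rcases dichotomy hb hbase (hsR α (hΔR hα)) with h | h
          · exact h
          · exact absurd (Finset.mem_filter.mpr ⟨hΔR hα, simple_pos hb hα, h⟩) (hcon α hα)
        have hall : ∀ β ∈ R, (∀ j, 0 ≤ b.repr β j) → ∀ j, 0 ≤ b.repr (s β) j := by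
          intro β hβ hposβ j
          have hdecomp : s β = ∑ i : ↥(Δ : Set V), b.repr β i • s (b i) := by
            conv_lhs => rw [← b.sum_repr β]
            rw [map_sum]
            exact Finset.sum_congr rfl fun i _ => by rw [map_smul]
          rw [hdecomp, map_sum, Finsupp.finset_sum_apply]
          refine Finset.sum_nonneg fun i _ => ?_
          rw [map_smul, Finsupp.smul_apply]
          have hiΔ : (b i : V) ∈ Δ := by rw [hb i]; exact Finset.mem_coe.mp i.2
          exact smul_nonneg (hposβ i) (by rw [hb i] at hiΔ ⊢; exact hpos _ hiΔ j)
        obtain ⟨β, hβf⟩ := hne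
        obtain ⟨hβR, hβpos, hβneg⟩ := Finset.mem_filter.mp hβf
        have hz := eq_zero_of_pos_neg (hall β hβR hβpos) hβneg
        exact hR0 (hz ▸ hsR β hβR)
      obtain ⟨α, hαΔ, hαf⟩ := hexists
      have hαR := hΔR hαΔ
      obtain ⟨hαR', hαpos, hsαneg⟩ := Finset.mem_filter.mp hαf
      have hαspan : α ∈ Submodule.span ℝ (A : Set V) := hspan α hαR' hαpos hsαneg
      -- α must be in A
      have hαA : α ∈ A := by
        by_contra hαA
        have hsupp : ∀ x ∈ Submodule.span ℝ (A : Set V),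
            b.repr x ⟨α, Finset.mem_coe.mpr hαΔ⟩ = 0 := by
          intro x hx
          induction hx using Submodule.span_induction with
          | mem γ hγ =>
            have hγΔ : γ ∈ Δ := hA hγ
            rw [repr_simple hb hγΔ, if_neg]
            intro h
            have hge : γ = α := by simpa using congrArg Subtype.val h
            exact hαA (hge ▸ hγ)
          | zero => simp
          | add x y _ _ hx hy => rw [map_add, Finsupp.add_apply, hx, hy, add_zero]
          | smul c x _ hx => rw [map_smul, Finsupp.smul_apply, hx, smul_zero]
        have h1 := hsupp α hαspan
        rw [repr_simple hb hαΔ, if_pos rfl] at h1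
        norm_num at h1
      have hinv := sref_invol hR0 hsref hαR
      set s' := s * sref α with hs'
      have hs'cl : s' ∈ Subgroup.closure (sref '' (Δ : Set V)) :=
        mul_mem hs (Subgroup.subset_closure ⟨α, Finset.mem_coe.mpr hαΔ, rfl⟩)
      -- inversion set of s'
      have key : R.filter (fun β => (∀ j, 0 ≤ b.repr β j) ∧ (∀ j, b.repr (s' β) j ≤ 0))
          = ((R.filter (fun β => (∀ j, 0 ≤ b.repr β j) ∧ (∀ j, b.repr (s β) j ≤ 0)))
              \ {α}).image (sref α) := by
        ext β
        simp only [Finset.mem_filter, Finset.mem_image, Finset.mem_sdiff,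
          Finset.mem_singleton]
        constructor
        · rintro ⟨hβR, hβpos, hβneg⟩
          have hβneg2 : ∀ j, b.repr (s (sref α β)) j ≤ 0 := hβneg
          have hβne : β ≠ α := by
            rintro rfl
            have h1 : s (sref β β) = - (s β) := by
              rw [sref_self hR0 hsref hαR, map_neg]
            have h2 : ∀ j, 0 ≤ b.repr (s β) j := by
              intro j
              have := hβneg2 j
              rw [h1, map_neg, Finsupp.neg_apply] at this
              linarith
            exact hR0 (eq_zero_of_pos_neg h2 hsαneg ▸ hsR β hβR)
          refine ⟨sref α β, ⟨⟨⟨hRrefl α hαR β hβR,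
            simple_perm hb hR0 hsref hRrefl hRred hΔR hbase hαΔ hβR hβne hβpos,
            ?_⟩, ?_⟩, hinv β⟩⟩
          · intro j
            exact hβneg2 j
          · intro hcontra
            have hβval : β = sref α α := by rw [← hinv β, hcontra]
            rw [sref_self hR0 hsref hαR] at hβval
            have : ∀ j, b.repr β j ≤ 0 := by
              intro j
              rw [hβval, map_neg, Finsupp.neg_apply]
              simpa using hαpos j
            exact hR0 (eq_zero_of_pos_neg hβpos this ▸ hβR)
        · rintro ⟨γ, ⟨⟨⟨hγR, hγpos, hγneg⟩, hγne⟩, rfl⟩⟩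
          refine ⟨hRrefl α hαR γ hγR,
            simple_perm hb hR0 hsref hRrefl hRred hΔR hbase hαΔ hγR hγne hγpos, ?_⟩
          intro j
          show b.repr (s (sref α (sref α γ))) j ≤ 0
          rw [hinv]
          exact hγneg j
      have hcard' : (R.filter (fun β => (∀ j, 0 ≤ b.repr β j) ∧
          (∀ j, b.repr (s' β) j ≤ 0))).card ≤ n := by
        rw [key]
        have h1 := Finset.card_image_le (s := (R.filter (fun β => (∀ j, 0 ≤ b.repr β j) ∧
          (∀ j, b.repr (s β) j ≤ 0))) \ {α}) (f := sref α)
        have h2 : ((R.filter (fun β => (∀ j, 0 ≤ b.repr β j) ∧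
            (∀ j, b.repr (s β) j ≤ 0))) \ {α}).card
            = (R.filter (fun β => (∀ j, 0 ≤ b.repr β j) ∧
            (∀ j, b.repr (s β) j ≤ 0))).card - 1 := by
          rw [Finset.card_sdiff_of_subset (Finset.singleton_subset_iff.mpr hαf)]
          simp
        omega
      have hspan' : ∀ β ∈ R, (∀ j, 0 ≤ b.repr β j) → (∀ j, b.repr (s' β) j ≤ 0) →
          β ∈ Submodule.span ℝ (A : Set V) := by
        intro β hβR hβpos hβneg
        have hβf : β ∈ R.filter (fun β => (∀ j, 0 ≤ b.repr β j) ∧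
            (∀ j, b.repr (s' β) j ≤ 0)) := Finset.mem_filter.mpr ⟨hβR, hβpos, hβneg⟩
        rw [key] at hβf
        obtain ⟨γ, hγmem, rfl⟩ := Finset.mem_image.mp hβf
        obtain ⟨hγf, _⟩ := Finset.mem_sdiff.mp hγmem
        obtain ⟨hγR, hγpos, hγneg⟩ := Finset.mem_filter.mp hγf
        rw [hsref α hαR γ]
        exact sub_mem (hspan γ hγR hγpos hγneg)
          (Submodule.smul_mem _ _ (Submodule.subset_span (Finset.mem_coe.mpr hαA)))
      have hs'mem := ih s' hs'cl hcard' hspan'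
      have hfinal : s = s' * sref α := by
        rw [hs', mul_assoc, sref_sq hR0 hsref hαR, mul_one]
      rw [hfinal]
      exact mul_mem hs'mem
        (Subgroup.subset_closure ⟨α, Finset.mem_coe.mpr hαA, rfl⟩)

end Aux

variable {V : Type*} [NormedAddCommGroup V] [InnerProductSpace ℝ V] [FiniteDimensional ℝ V]

/-- Let `R` be a reduced root system in `V` with base `Δ`, Weyl group
generated by the reflections `sref α` (`α ∈ Δ`). Let `s` be in the Weyl group and `A ⊆ Δ`.
If every `β ∈ R(s) = {β ∈ R⁺ : s β ∈ −R⁺}` lies in the span of `A`, then `s` belongs to the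
subgroup `W_A` generated by the reflections `sref α` for `α ∈ A`. -/
theorem stmt_14
    (R : Finset V) (hR0 : (0 : V) ∉ R)
    (hRspan : Submodule.span ℝ (R : Set V) = ⊤)
    (sref : V → (V ≃ₗᵢ[ℝ] V))
    (hsref : ∀ α ∈ R, ∀ x : V, sref α x = x - (2 * ⟪x, α⟫ / ⟪α, α⟫) • α)
    (hRrefl : ∀ α ∈ R, ∀ β ∈ R, sref α β ∈ R)
    (hRint : ∀ α ∈ R, ∀ β ∈ R, ∃ n : ℤ, 2 * ⟪β, α⟫ / ⟪α, α⟫ = (n : ℝ))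
    (hRred : ∀ α ∈ R, ∀ c : ℝ, c • α ∈ R → c = 1 ∨ c = -1)
    (Δ : Finset V) (hΔR : Δ ⊆ R)
    (hΔli : LinearIndependent ℝ ((↑) : ↥(Δ : Set V) → V))
    (hΔspan : Submodule.span ℝ (Δ : Set V) = ⊤)
    (hbase : ∀ β ∈ R, PosComb Δ β ∨ PosComb Δ (-β))
    (s : V ≃ₗᵢ[ℝ] V) (hs : s ∈ Subgroup.closure (sref '' (Δ : Set V)))
    (A : Finset V) (hA : A ⊆ Δ)
    (hRs : ∀ β ∈ R, PosComb Δ β → PosComb Δ (-(s β)) →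
      β ∈ Submodule.span ℝ (A : Set V)) :
    s ∈ Subgroup.closure (sref '' (A : Set V)) := by
  have hspan' : ⊤ ≤ Submodule.span ℝ (Set.range ((↑) : ↥(Δ : Set V) → V)) := by
    rw [Subtype.range_coe]
    exact hΔspan.ge
  set b : Module.Basis ↥(Δ : Set V) ℝ V := Module.Basis.mk hΔli hspan' with hbdef
  have hb : ∀ i : ↥(Δ : Set V), (b i : V) = i := fun i => by
    rw [hbdef, Module.Basis.mk_apply]
  have hsR : ∀ β ∈ R, s β ∈ R := by
    obtain ⟨l, hl, heq⟩ := word_exists hR0 hsref hΔR hs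
    rw [heq]
    exact word_mapsR hRrefl hΔR hl
  apply main_ind hb hR0 hsref hRrefl hRred hΔR hbase A hA
    ((R.filter (fun β => (∀ j, 0 ≤ b.repr β j) ∧ (∀ j, b.repr (s β) j ≤ 0))).card)
    s hs le_rfl
  intro β hβR hβpos hβneg
  apply hRs β hβR (posComb_of_repr hb hR0 hbase hβR hβpos)
  rcases hbase (s β) (hsR β hβR) with h | h
  · exfalso
    exact hR0 (eq_zero_of_pos_neg (posComb_repr hb h) hβneg ▸ hsR β hβR)
  · exact h
end

section
/- For every s ∈ W there exists a map c : R(s) → Δ such that for every T ∈ V one has T − s⁻¹(T) = ∑_{β ∈ R(s)} ⟨c(β), T⟩ β∨. Consequently, each coefficient ⟨c(β), T⟩ is at least min_{α ∈ Δ} ⟨α, T⟩, and if ⟨α, T⟩ > 0 for every α ∈ Δ then all the coefficients are strictly positive. -/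
open scoped RealInnerProductSpace Classical

variable {V : Type*} [NormedAddCommGroup V] [InnerProductSpace ℝ V] [FiniteDimensional ℝ V]

/-- Let `R` be a reduced root system in `V` with base `Δ` and Weyl group
generated by the reflections `sref α` (`α ∈ Δ`). For every `s` in the Weyl group there is a
map `c : R(s) → Δ` such that `T − s⁻¹ T = ∑_{β ∈ R(s)} ⟪c β, T⟫ β∨` for every `T`;
consequently each coefficient `⟪c β, T⟫` is at least `min_{α ∈ Δ} ⟪α, T⟫` (i.e. at least any
lower bound of the `⟪α, T⟫`), and if `⟪α, T⟫ > 0` for every `α ∈ Δ` then all the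
coefficients are strictly positive. -/
theorem stmt_15
    (R : Finset V) (hR0 : (0 : V) ∉ R)
    (hRspan : Submodule.span ℝ (R : Set V) = ⊤)
    (sref : V → (V ≃ₗᵢ[ℝ] V))
    (hsref : ∀ α ∈ R, ∀ x : V, sref α x = x - (2 * ⟪x, α⟫ / ⟪α, α⟫) • α)
    (hRrefl : ∀ α ∈ R, ∀ β ∈ R, sref α β ∈ R)
    (hRint : ∀ α ∈ R, ∀ β ∈ R, ∃ n : ℤ, 2 * ⟪β, α⟫ / ⟪α, α⟫ = (n : ℝ))
    (hRred : ∀ α ∈ R, ∀ c : ℝ, c • α ∈ R → c = 1 ∨ c = -1)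
    (Δ : Finset V) (hΔR : Δ ⊆ R)
    (hΔli : LinearIndependent ℝ ((↑) : ↥(Δ : Set V) → V))
    (hΔspan : Submodule.span ℝ (Δ : Set V) = ⊤)
    (hbase : ∀ β ∈ R, PosComb Δ β ∨ PosComb Δ (-β))
    (s : V ≃ₗᵢ[ℝ] V) (hs : s ∈ Subgroup.closure (sref '' (Δ : Set V))) :
    ∃ c : V → V,
      (∀ β ∈ R.filter (fun β => PosComb Δ β ∧ PosComb Δ (-(s β))), c β ∈ Δ) ∧
      (∀ T : V, T - s⁻¹ T =
        ∑ β ∈ R.filter (fun β => PosComb Δ β ∧ PosComb Δ (-(s β))),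
          ⟪c β, T⟫ • ((2 / ⟪β, β⟫) • β)) ∧
      (∀ T : V, ∀ β ∈ R.filter (fun β => PosComb Δ β ∧ PosComb Δ (-(s β))),
        ∀ m : ℝ, (∀ α ∈ Δ, m ≤ ⟪α, T⟫) → m ≤ ⟪c β, T⟫) ∧
      (∀ T : V, (∀ α ∈ Δ, 0 < ⟪α, T⟫) →
        ∀ β ∈ R.filter (fun β => PosComb Δ β ∧ PosComb Δ (-(s β))), 0 < ⟪c β, T⟫) := by
  -- uniqueness of coefficients over the base
  have huniq : ∀ f g : V → ℝ, (∑ α ∈ Δ, f α • α = ∑ α ∈ Δ, g α • α) → ∀ α ∈ Δ, f α = g α := by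
    intro f g h α hα
    have h0 : ∑ i : (Δ : Set V), (f i.1 - g i.1) • (i.1 : V) = 0 := by
      rw [Finset.sum_finset_coe (fun y => (f y - g y) • y) Δ]
      simp [sub_smul, Finset.sum_sub_distrib, h]
    have h2 : f α - g α = 0 := linearIndependent_iff'.mp hΔli Finset.univ
      (fun i => f i.1 - g i.1) h0 ⟨α, hα⟩ (Finset.mem_univ _)
    linarith
  -- a vector and its negative cannot both be positive combinations (unless zero)
  have hnotboth : ∀ β : V, β ≠ 0 → PosComb Δ β → PosComb Δ (-β) → False := by
    intro β hβ ⟨c, hc0, hcβ⟩ ⟨d, hd0, hdβ⟩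
    have hsum : ∑ α ∈ Δ, ((c α : ℝ) + (d α : ℝ)) • α = ∑ α ∈ Δ, (0 : ℝ) • α := by
      simp only [add_smul, Finset.sum_add_distrib]
      rw [← hcβ, ← hdβ]; simp
    have hz : ∀ α ∈ Δ, (c α : ℝ) + (d α : ℝ) = 0 :=
      huniq (fun α => (c α : ℝ) + d α) (fun _ => 0) hsum
    apply hβ
    rw [hcβ]
    apply Finset.sum_eq_zero
    intro α hα
    have h1 : (0:ℝ) ≤ (c α : ℝ) := by exact_mod_cast hc0 α
    have h2 : (0:ℝ) ≤ (d α : ℝ) := by exact_mod_cast hd0 α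
    have := hz α hα
    have : (c α : ℝ) = 0 := by linarith
    rw [this, zero_smul]
  -- simple roots are positive
  have hΔpos : ∀ α ∈ Δ, PosComb Δ α := by
    intro α hα
    refine ⟨fun x => if x = α then 1 else 0, fun x => by by_cases h : x = α <;> simp [h], ?_⟩
    rw [Finset.sum_eq_single α]
    · simp
    · intro b _ hb; simp [hb]
    · intro h; exact absurd hα h
  have hP0 : ∀ β ∈ R, β ≠ (0:V) := fun β hβ h => hR0 (h ▸ hβ)
  have hnn : ∀ α ∈ R, ⟪α, α⟫ ≠ 0 := fun α hα => inner_self_ne_zero.mpr (hP0 α hα)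
  -- reflection of a root in itself
  have hselfneg : ∀ α ∈ R, sref α α = -α := by
    intro α hα
    rw [hsref α hα α]
    rw [mul_div_assoc, div_self (hnn α hα), mul_one]
    module
  have hnegR : ∀ β ∈ R, -β ∈ R := fun β hβ => (hselfneg β hβ) ▸ hRrefl β hβ β hβ
  -- reflections are involutions
  have hinvol : ∀ α ∈ R, ∀ x : V, sref α (sref α x) = x := by
    intro α hα x
    have hx := hsref α hα x
    have hinner : ⟪sref α x, α⟫ = -⟪x, α⟫ := by
      rw [hx, inner_sub_left, real_inner_smul_left, div_mul_cancel₀ _ (hnn α hα)]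
      ring
    rw [hsref α hα (sref α x), hinner, hx]
    have : 2 * -⟪x, α⟫ / ⟪α, α⟫ = -(2 * ⟪x, α⟫ / ⟪α, α⟫) := by ring
    rw [this, neg_smul, sub_neg_eq_add, sub_add_cancel]
  have hss1 : ∀ α ∈ R, sref α * sref α = 1 := by
    intro α hα
    ext x
    exact hinvol α hα x
  have hsinv : ∀ α ∈ R, (sref α)⁻¹ = sref α :=
    fun α hα => inv_eq_of_mul_eq_one_right (hss1 α hα)
  -- elements of the Weyl group preserve R
  have hpres : ∀ w : V ≃ₗᵢ[ℝ] V, w ∈ Subgroup.closure (sref '' (Δ : Set V)) →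
      ∀ β ∈ R, w β ∈ R := by
    intro w hw
    have : (∀ β ∈ R, w β ∈ R) ∧ (∀ β ∈ R, w⁻¹ β ∈ R) := by
      induction hw using Subgroup.closure_induction with
      | mem x hx =>
        obtain ⟨α, hα, rfl⟩ := hx
        have hαR := hΔR hα
        constructor
        · exact fun β hβ => hRrefl α hαR β hβ
        · rw [hsinv α hαR]; exact fun β hβ => hRrefl α hαR β hβ
      | one => constructor <;> intro β hβ <;> simpa
      | mul x y hx hy ihx ihy =>
        constructor
        · intro β hβ
          have : (x * y) β = x (y β) := rfl
          rw [this]; exact ihx.1 _ (ihy.1 β hβ)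
        · intro β hβ
          have : (x * y)⁻¹ β = y⁻¹ (x⁻¹ β) := by rw [mul_inv_rev]; rfl
          rw [this]; exact ihy.2 _ (ihx.2 β hβ)
      | inv x hx ihx => exact ⟨ihx.2, by simpa using ihx.1⟩
    exact this.1
  -- the key lemma: a simple reflection permutes the positive roots other than itself
  have hkey : ∀ α ∈ Δ, ∀ β ∈ R, PosComb Δ β → β ≠ α → PosComb Δ (sref α β) := by
    intro α hα β hβR hβpos hβα
    have hαR := hΔR hα
    have hsβR : sref α β ∈ R := hRrefl α hαR β hβR
    rcases hbase _ hsβR with h | h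
    · exact h
    exfalso
    obtain ⟨c, hc0, hcβ⟩ := hβpos
    obtain ⟨d, hd0, hdβ⟩ := h
    set k : ℝ := 2 * ⟪β, α⟫ / ⟪α, α⟫ with hk
    have hsβ : sref α β = β - k • α := hsref α hαR β
    -- express sref α β as a combination
    have hcomb : ∑ δ ∈ Δ, ((c δ : ℝ) - (if δ = α then k else 0)) • δ
        = ∑ δ ∈ Δ, (-(d δ : ℝ)) • δ := by
      simp only [sub_smul, neg_smul, Finset.sum_sub_distrib]
      have h1 : ∑ δ ∈ Δ, (if δ = α then k else 0) • δ = k • α := by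
        rw [Finset.sum_eq_single α]
        · simp
        · intro b _ hb; simp [hb]
        · intro h; exact absurd hα h
      rw [h1, ← hcβ]
      have h2 : β - k • α = -(∑ δ ∈ Δ, (d δ : ℝ) • δ) := by
        rw [← hdβ, neg_neg, hsβ]
      rw [h2, ← Finset.sum_neg_distrib]
    have hco := huniq _ _ hcomb
    -- all coefficients of β away from α vanish
    have hvanish : ∀ δ ∈ Δ, δ ≠ α → (c δ : ℝ) = 0 := by
      intro δ hδ hδα
      have := hco δ hδ
      simp only [hδα, if_false, sub_zero] at this
      have h1 : (0:ℝ) ≤ (c δ : ℝ) := by exact_mod_cast hc0 δ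
      have h2 : (0:ℝ) ≤ (d δ : ℝ) := by exact_mod_cast hd0 δ
      linarith
    -- hence β is a multiple of α
    have hβmul : β = (c α : ℝ) • α := by
      rw [hcβ, Finset.sum_eq_single α]
      · intro b hb hbα; rw [hvanish b hb hbα, zero_smul]
      · intro h; exact absurd hα h
    have hmem : (c α : ℝ) • α ∈ R := hβmul ▸ hβR
    rcases hRred α hαR _ hmem with h1 | h1
    · apply hβα; rw [hβmul, h1, one_smul]
    · -- β = -α : impossible since β is positive and α is positive
      have hβnegα : β = -α := by rw [hβmul, h1, neg_smul, one_smul]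
      exact hnotboth β (hP0 β hβR) ⟨c, hc0, hcβ⟩
        (by rw [hβnegα, neg_neg]; exact hΔpos α hα)
  -- corollary: if a positive root is sent to a negative root by s_α then it is α
  have hkey' : ∀ α ∈ Δ, ∀ β ∈ R, PosComb Δ β → PosComb Δ (-(sref α β)) → β = α := by
    intro α hα β hβR hβpos hneg
    by_contra hβα
    exact hnotboth (sref α β) (hP0 _ (hRrefl α (hΔR hα) β hβR))
      (hkey α hα β hβR hβpos hβα) hneg
  -- dual form: negative roots other than -α stay negative
  have hdual : ∀ α ∈ Δ, ∀ β ∈ R, PosComb Δ (-β) → β ≠ -α → PosComb Δ (-(sref α β)) := by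
    intro α hα β hβR hβneg hβα
    have h1 : (-β) ≠ α := by
      intro h; apply hβα; rw [← h, neg_neg]
    have h2 := hkey α hα (-β) (hnegR β hβR) hβneg h1
    rwa [map_neg] at h2
  -- conjugation formula for reflections
  have hconj : ∀ β ∈ R, ∀ w : V ≃ₗᵢ[ℝ] V, w β ∈ R → sref (w β) = w * sref β * w⁻¹ := by
    intro β hβ w hwβ
    ext x
    have h1 : (w * sref β * w⁻¹) x = w (sref β (w.symm x)) := rfl
    rw [h1, hsref β hβ (w.symm x), hsref (w β) hwβ x]
    rw [map_sub, map_smul, w.apply_symm_apply]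
    congr 2
    rw [← LinearIsometryEquiv.inner_map_map w (w.symm x) β, w.apply_symm_apply]
    rw [← LinearIsometryEquiv.inner_map_map w β β]
  -- products of generator lists lie in the Weyl group
  have hmemcl : ∀ l : List (V ≃ₗᵢ[ℝ] V), (∀ x ∈ l, ∃ δ ∈ Δ, x = sref δ) →
      l.prod ∈ Subgroup.closure (sref '' (Δ : Set V)) := by
    intro l hl
    apply list_prod_mem
    intro x hx
    obtain ⟨δ, hδ, rfl⟩ := hl x hx
    exact Subgroup.subset_closure ⟨δ, hδ, rfl⟩
  -- the exchange lemma
  have exch : ∀ l : List (V ≃ₗᵢ[ℝ] V), (∀ x ∈ l, ∃ δ ∈ Δ, x = sref δ) →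
      ∀ α ∈ R, PosComb Δ α → ¬ PosComb Δ (l.prod⁻¹ α) →
      ∃ l' : List (V ≃ₗᵢ[ℝ] V), (∀ x ∈ l', ∃ δ ∈ Δ, x = sref δ) ∧
        l'.length + 1 = l.length ∧ l'.prod = sref α * l.prod := by
    intro l
    induction l with
    | nil =>
      intro _ α hαR hαpos hneg
      exfalso
      apply hneg
      simpa using hαpos
    | cons r rest ih =>
      intro hl α hαR hαpos hneg
      obtain ⟨δ, hδ, rfl⟩ := hl r List.mem_cons_self
      have hδR := hΔR hδ
      have hrest : ∀ x ∈ rest, ∃ δ ∈ Δ, x = sref δ :=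
        fun x hx => hl x (List.mem_cons_of_mem _ hx)
      by_cases hcase : α = δ
      · subst hcase
        refine ⟨rest, hrest, rfl, ?_⟩
        rw [List.prod_cons, ← mul_assoc, hss1 α hαR, one_mul]
      · have hα'R : sref δ α ∈ R := hRrefl δ hδR α hαR
        have hα'pos : PosComb Δ (sref δ α) := hkey δ hδ α hαR hαpos hcase
        have hneg' : ¬ PosComb Δ (rest.prod⁻¹ (sref δ α)) := by
          intro h
          apply hneg
          have heq : (List.prod (sref δ :: rest))⁻¹ α = rest.prod⁻¹ (sref δ α) := by
            rw [List.prod_cons, mul_inv_rev, hsinv δ hδR]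
            rfl
          rwa [heq]
        obtain ⟨l'', hgen'', hlen'', hprod''⟩ := ih hrest (sref δ α) hα'R hα'pos hneg'
        refine ⟨sref δ :: l'', ?_, ?_, ?_⟩
        · intro x hx
          rcases List.mem_cons.mp hx with h | h
          · exact ⟨δ, hδ, h⟩
          · exact hgen'' x h
        · simp only [List.length_cons]
          omega
        · rw [List.prod_cons, hprod'', List.prod_cons]
          rw [hconj α hαR (sref δ) hα'R, hsinv δ hδR]
          rw [← mul_assoc, ← mul_assoc, ← mul_assoc, hss1 δ hδR, one_mul, mul_assoc]
  -- the main induction on word length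
  have main : ∀ n : ℕ, ∀ l : List (V ≃ₗᵢ[ℝ] V), l.length ≤ n →
      (∀ x ∈ l, ∃ δ ∈ Δ, x = sref δ) →
      ∃ c : V → V,
        (∀ β ∈ R.filter (fun β => PosComb Δ β ∧ PosComb Δ (-(l.prod β))), c β ∈ Δ) ∧
        (∀ T : V, T - (l.prod)⁻¹ T =
          ∑ β ∈ R.filter (fun β => PosComb Δ β ∧ PosComb Δ (-(l.prod β))),
            ⟪c β, T⟫ • ((2 / ⟪β, β⟫) • β)) := by
    intro n
    induction n with
    | zero =>
      intro l hlen _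
      have hnil : l = [] := List.eq_nil_of_length_eq_zero (Nat.le_zero.mp hlen)
      subst hnil
      have hF : R.filter (fun β => PosComb Δ β ∧ PosComb Δ (-(List.prod ([] : List (V ≃ₗᵢ[ℝ] V)) β))) = ∅ := by
        rw [Finset.filter_eq_empty_iff]
        rintro β hβ ⟨h1, h2⟩
        have : (List.prod ([] : List (V ≃ₗᵢ[ℝ] V))) β = β := by simp
        rw [this] at h2
        exact hnotboth β (hP0 β hβ) h1 h2
      refine ⟨fun _ => 0, ?_, ?_⟩
      · rw [hF]; intro β hβ; exact absurd hβ (Finset.notMem_empty β)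
      · intro T; rw [hF]; simp
    | succ n ihn =>
      intro l hlen hgen
      cases l with
      | nil => exact ihn [] (by simp) (by simp)
      | cons r tl =>
        obtain ⟨α, hα, rfl⟩ := hgen r List.mem_cons_self
        have hαR := hΔR hα
        have hgen' : ∀ x ∈ tl, ∃ δ ∈ Δ, x = sref δ :=
          fun x hx => hgen x (List.mem_cons_of_mem _ hx)
        have hlen' : tl.length ≤ n := by
          simp only [List.length_cons] at hlen; omega
        set t : V ≃ₗᵢ[ℝ] V := tl.prod with ht
        have ht_cl : t ∈ Subgroup.closure (sref '' (Δ : Set V)) := hmemcl tl hgen'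
        by_cases hcase : PosComb Δ (t⁻¹ α)
        · -- length goes up: extend the coefficient function
          set γ : V := t⁻¹ α with hγ
          have hγR : γ ∈ R := hpres t⁻¹ (inv_mem ht_cl) α hαR
          have htγ : t γ = α := by
            show t (t.symm α) = α
            exact t.apply_symm_apply α
          obtain ⟨c, hc1, hc2⟩ := ihn tl hlen' hgen'
          have hprod : List.prod (sref α :: tl) = sref α * t := List.prod_cons
          have happ : ∀ β : V, (List.prod (sref α :: tl)) β = sref α (t β) := by
            intro β; rw [hprod]; rfl
          have hFs : R.filter (fun β => PosComb Δ β ∧ PosComb Δ (-(List.prod (sref α :: tl) β)))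
              = insert γ (R.filter (fun β => PosComb Δ β ∧ PosComb Δ (-(t β)))) := by
            ext β
            simp only [Finset.mem_filter, Finset.mem_insert]
            constructor
            · rintro ⟨hβR, hβpos, hβneg⟩
              rw [happ] at hβneg
              by_cases hβγ : β = γ
              · exact Or.inl hβγ
              · refine Or.inr ⟨hβR, hβpos, ?_⟩
                have htβR : t β ∈ R := hpres t ht_cl β hβR
                rcases hbase _ htβR with h | h
                · exfalso
                  have := hkey' α hα (t β) htβR h hβneg
                  apply hβγ
                  have : β = t⁻¹ (t β) := by
                    show β = t.symm (t β); rw [t.symm_apply_apply]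
                  rw [this, ‹t β = α›]
                · exact h
            · rintro (rfl | ⟨hβR, hβpos, hβneg⟩)
              · refine ⟨hγR, hcase, ?_⟩
                rw [happ, htγ, hselfneg α hαR, neg_neg]
                exact hΔpos α hα
              · refine ⟨hβR, hβpos, ?_⟩
                rw [happ]
                have htβR : t β ∈ R := hpres t ht_cl β hβR
                apply hdual α hα (t β) htβR hβneg
                intro hcontra
                have hβγ : β = -γ := by
                  have : β = t⁻¹ (t β) := by
                    show β = t.symm (t β); rw [t.symm_apply_apply]
                  rw [this, hcontra, map_neg]
                apply hnotboth β (hP0 β hβR) hβpos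
                rw [hβγ, neg_neg]
                exact hcase
          have hγnot : γ ∉ R.filter (fun β => PosComb Δ β ∧ PosComb Δ (-(t β))) := by
            simp only [Finset.mem_filter, not_and]
            intro _ _ h
            rw [htγ] at h
            exact hnotboth α (hP0 α hαR) (hΔpos α hα) h
          refine ⟨Function.update c γ α, ?_, ?_⟩
          · intro β hβ
            rw [hFs, Finset.mem_insert] at hβ
            rcases hβ with rfl | hβ
            · rw [Function.update_self]; exact hα
            · have hβγ : β ≠ γ := fun h => hγnot (h ▸ hβ)
              rw [Function.update_of_ne hβγ]
              exact hc1 β hβ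
          · intro T
            have hsinv' : (List.prod (sref α :: tl))⁻¹ = t⁻¹ * sref α := by
              rw [hprod, mul_inv_rev, hsinv α hαR]
            have hrefl : T - sref α T = (2 * ⟪T, α⟫ / ⟪α, α⟫) • α := by
              rw [hsref α hαR T]; exact (sub_sub_cancel _ _)
            have hstep : T - (List.prod (sref α :: tl))⁻¹ T
                = (T - t⁻¹ T) + (2 * ⟪T, α⟫ / ⟪α, α⟫) • γ := by
              have h1 : (List.prod (sref α :: tl))⁻¹ T = t⁻¹ (sref α T) := by
                rw [hsinv']; rfl
              have h2 : t⁻¹ (T - sref α T) = t⁻¹ T - t⁻¹ (sref α T) := map_sub _ _ _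
              have h3 : t⁻¹ ((2 * ⟪T, α⟫ / ⟪α, α⟫) • α) = (2 * ⟪T, α⟫ / ⟪α, α⟫) • γ := by
                rw [map_smul]
              rw [h1, ← h3, ← hrefl, h2]
              abel
            rw [hstep, hFs, Finset.sum_insert hγnot, hc2 T]
            have hγγ : ⟪γ, γ⟫ = ⟪α, α⟫ := by
              show ⟪t.symm α, t.symm α⟫ = ⟪α, α⟫
              exact LinearIsometryEquiv.inner_map_map t.symm α α
            have hterm : ⟪Function.update c γ α γ, T⟫ • ((2 / ⟪γ, γ⟫) • γ)
                = (2 * ⟪T, α⟫ / ⟪α, α⟫) • γ := by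
              rw [Function.update_self, hγγ, smul_smul]
              congr 1
              rw [real_inner_comm]
              ring
            rw [hterm]
            have hrest : ∑ β ∈ R.filter (fun β => PosComb Δ β ∧ PosComb Δ (-(t β))),
                ⟪Function.update c γ α β, T⟫ • ((2 / ⟪β, β⟫) • β)
                = ∑ β ∈ R.filter (fun β => PosComb Δ β ∧ PosComb Δ (-(t β))),
                ⟪c β, T⟫ • ((2 / ⟪β, β⟫) • β) := by
              apply Finset.sum_congr rfl
              intro β hβ
              have hβγ : β ≠ γ := fun h => hγnot (h ▸ hβ)
              rw [Function.update_of_ne hβγ]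
            rw [hrest]
            abel
        · -- length goes down: use the exchange lemma
          obtain ⟨l', hgen'', hlen'', hprod''⟩ := exch tl hgen' α hαR (hΔpos α hα) hcase
          have hlen3 : l'.length ≤ n := by omega
          have res := ihn l' hlen3 hgen''
          rw [hprod''] at res
          have : List.prod (sref α :: tl) = sref α * t := List.prod_cons
          rw [this]
          exact res
  -- conclude
  have hs' : s ∈ (Subgroup.closure (sref '' (Δ : Set V))).toSubmonoid := hs
  rw [Subgroup.closure_toSubmonoid] at hs'
  obtain ⟨l, hl, hlprod⟩ := Submonoid.exists_list_of_mem_closure hs'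
  have hgen : ∀ x ∈ l, ∃ δ ∈ Δ, x = sref δ := by
    intro x hx
    rcases hl x hx with h | h
    · obtain ⟨δ, hδ, rfl⟩ := h
      exact ⟨δ, hδ, rfl⟩
    · rw [Set.mem_inv] at h
      obtain ⟨δ, hδ, hh⟩ := h
      refine ⟨δ, hδ, ?_⟩
      rw [← inv_inv x, ← hh, hsinv δ (hΔR hδ)]
  obtain ⟨c, h1, h2⟩ := main l.length l le_rfl hgen
  rw [hlprod] at h1 h2
  exact ⟨c, h1, h2, fun T β hβ m hm => hm _ (h1 β hβ), fun T hT β hβ => hT _ (h1 β hβ)⟩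
end
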